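/- Let (X, Π) be a weighted pure d-dimensional simplicial complex and let 1 ≤ k ≤ d. Suppose γ_{k−2} ≤ 1/(k+1) and γ_j < 1 for every −1 ≤ j ≤ k−2 (i.e., the link walk matrix M_α has λ₂(M_α) < 1 for every face α of dimension at most k−2). Then λ₂(P∨_k) = λ₂(P∧_{k−1}) ≤ 1 − 1/(k+1)². -/

import Mathlib

open Finset

/-- A weighted pure `d`-dimensional simplicial complex on a finite ground set `V`.
Faces are finsets; a face of cardinality `m` has dimension `m - 1` (so `X(j)` is the
set of faces of cardinality `j + 1`).  The family of faces is downward closed, every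
face is contained in a face of cardinality `d + 1` (purity), and a probability
distribution `Π = Π_d` (positive weights summing to `1`) is given on the
top-dimensional faces. -/
structure WSC (V : Type*) [DecidableEq V] [Fintype V] (d : ℕ) where
  faces : Finset (Finset V)
  empty_mem : ∅ ∈ faces
  down_closed : ∀ β ∈ faces, ∀ α ⊆ β, α ∈ faces
  pure : ∀ α ∈ faces, ∃ β ∈ faces, α ⊆ β ∧ β.card = d + 1
  dim_le : ∀ α ∈ faces, α.card ≤ d + 1
  weight : Finset V → ℝ
  weight_pos : ∀ β ∈ faces, β.card = d + 1 → 0 < weight β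
  weight_zero : ∀ β : Finset V, β ∉ faces ∨ β.card ≠ d + 1 → weight β = 0
  weight_sum : ∑ β ∈ faces.filter (fun β => β.card = d + 1), weight β = 1

namespace WSC

variable {V : Type*} [DecidableEq V] [Fintype V] {d : ℕ}

/-- Auxiliary recursion for the marginal distributions: `Waux X t` is the marginal
distribution `Π_{d - t}` on faces of cardinality `d + 1 - t`, defined by
`Π_j(α) = (1/(j+2)) ∑_{β ∈ X(j+1), β ⊇ α} Π_{j+1}(β)`. -/
noncomputable def Waux (X : WSC V d) : ℕ → Finset V → ℝ
  | 0 => X.weight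
  | (t + 1) => fun α =>
      (1 / ((d + 1 - t : ℕ) : ℝ)) *
        ∑ β ∈ X.faces.filter (fun β => α ⊆ β ∧ β.card = d + 1 - t), X.Waux t β

/-- `X.W m α` is the marginal probability `Π_{m-1}(α)` of the face `α` of cardinality
`m` (dimension `m - 1`). -/
noncomputable def W (X : WSC V d) (m : ℕ) : Finset V → ℝ := X.Waux (d + 1 - m)

/-- The inner product `⟨f, g⟩_{Π_{m-1}}` on `ℝ^{X(m-1)}` (faces of cardinality `m`). -/
noncomputable def inn (X : WSC V d) (m : ℕ) (f g : Finset V → ℝ) : ℝ :=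
  ∑ α ∈ X.faces.filter (fun α => α.card = m), X.W m α * f α * g α

/-- The up operator `U_j`: `(U_j f)(β) = (1/(j+2)) ∑_{x ∈ β} f(β \ {x})`, for `β` of
cardinality `j + 2`.  (The formula is uniform in the cardinality of `β`.) -/
noncomputable def upOp (f : Finset V → ℝ) : Finset V → ℝ :=
  fun β => (1 / (β.card : ℝ)) * ∑ x ∈ β, f (β.erase x)

/-- The down operator `D_{j+1}`:
`(D_{j+1} g)(α) = ∑_{β ∈ X(j+1), β ⊇ α} Π_{j+1}(β) g(β) / ((j+2) Π_j(α))`, for `α` of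
cardinality `j + 1`.  (The formula is uniform in the cardinality of `α`.) -/
noncomputable def downOp (X : WSC V d) (g : Finset V → ℝ) : Finset V → ℝ :=
  fun α => ∑ β ∈ X.faces.filter (fun β => α ⊆ β ∧ β.card = α.card + 1),
      (X.W (α.card + 1) β * g β) / (((α.card : ℝ) + 1) * X.W α.card α)

/-- The down-up walk `P∨_k = U_{k-1} D_k`, acting on functions on `X(k)` (faces of
cardinality `k + 1`). -/
noncomputable def downUp (X : WSC V d) (f : Finset V → ℝ) : Finset V → ℝ :=
  upOp (X.downOp f)

/-- The up-down walk `P∧_k = D_{k+1} U_k`, acting on functions on `X(k)` (faces of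
cardinality `k + 1`). -/
noncomputable def upDown (X : WSC V d) (f : Finset V → ℝ) : Finset V → ℝ :=
  X.downOp (upOp f)

/-- The `k`-th non-lazy up-down walk `N_k = ((k+2)/(k+1)) (P∧_k - (1/(k+2)) I)`. -/
noncomputable def nonLazy (X : WSC V d) (k : ℕ) (f : Finset V → ℝ) : Finset V → ℝ :=
  fun α => (((k : ℝ) + 2) / ((k : ℝ) + 1)) * (X.upDown f α - (1 / ((k : ℝ) + 2)) * f α)

/-- The up-down walk `U_{a,b} = D_{a+1} ⋯ D_b · U_{b-1} ⋯ U_a` on `X(a)` through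
`X(b)`, where `t = b - a`. -/
noncomputable def upDownAB (X : WSC V d) (t : ℕ) (f : Finset V → ℝ) : Finset V → ℝ :=
  (X.downOp)^[t] (upOp^[t] f)

/-- The second largest eigenvalue of a row-stochastic operator `M` on `ℝ^{X(m-1)}`
(faces of cardinality `m`) which is self-adjoint with respect to `⟨·,·⟩_{Π_{m-1}}`
and has stationary distribution `Π_{m-1}`: by the variational principle it is the
supremum of the Rayleigh quotients of (nonzero) functions orthogonal to the
constant function `1`. -/
noncomputable def lam2 (X : WSC V d) (m : ℕ) (M : (Finset V → ℝ) → Finset V → ℝ) : ℝ :=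
  sSup { r : ℝ | ∃ f : Finset V → ℝ,
    X.inn m f (fun _ => 1) = 0 ∧ X.inn m f f ≠ 0 ∧
    r = X.inn m f (M f) / X.inn m f f }

/-- The vertices of the link `X_α`: those `x ∉ α` with `α ∪ {x} ∈ X`. -/
def linkVerts (X : WSC V d) (α : Finset V) : Finset V :=
  Finset.univ.filter (fun x => x ∉ α ∧ insert x α ∈ X.faces)

/-- The link distribution `Π^α_l(τ) = Π_{j+1+l}(α ∪ τ) / (C(|α ∪ τ|, |α|) · Π_j(α))`
for a face `α` of dimension `j` and `τ ∈ X_α(l)`. -/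
noncomputable def linkPi (X : WSC V d) (α τ : Finset V) : ℝ :=
  X.W (α ∪ τ).card (α ∪ τ) / ((Nat.choose (α ∪ τ).card α.card : ℝ) * X.W α.card α)

/-- The random walk matrix `M_α` of the graph of the link `X_α`, with entries
`M_α(x, y) = Π^α_1({x, y}) / (2 Π^α_0(x))` for `{x, y} ∈ X_α(1)` and `0` otherwise,
viewed as an operator on functions on the vertices of the link. -/
noncomputable def linkWalk (X : WSC V d) (α : Finset V) (f : V → ℝ) : V → ℝ :=
  fun x => ∑ y ∈ (X.linkVerts α).filter
      (fun y => y ≠ x ∧ insert y (insert x α) ∈ X.faces),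
    (X.linkPi α {x, y} / (2 * X.linkPi α {x})) * f y

/-- The projector `J_α` onto the constant functions on the link: `J_α g` is the
constant function with value `E_{x ∼ Π^α_0}[g(x)]`. -/
noncomputable def linkJ (X : WSC V d) (α : Finset V) (g : V → ℝ) : V → ℝ :=
  fun _ => ∑ x ∈ X.linkVerts α, X.linkPi α {x} * g x

/-- The inner product `⟨g, h⟩_{Π^α_0}` on functions on the vertices of the link. -/
noncomputable def linkInner (X : WSC V d) (α : Finset V) (g h : V → ℝ) : ℝ :=
  ∑ x ∈ X.linkVerts α, X.linkPi α {x} * g x * h x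

/-- The second largest eigenvalue `λ₂(M_α)` of the random walk matrix of the graph
of the link `X_α`, via the variational principle. -/
noncomputable def linkLam2 (X : WSC V d) (α : Finset V) : ℝ :=
  sSup { r : ℝ | ∃ f : V → ℝ,
    X.linkInner α f (fun _ => 1) = 0 ∧ X.linkInner α f f ≠ 0 ∧
    r = X.linkInner α f (X.linkWalk α f) / X.linkInner α f f }

/-- `X.gammaC m` is `γ_{m-1} = max_{α ∈ X(m-1)} λ₂(M_α)`, the maximum over faces `α`
of cardinality `m` (dimension `m - 1`) of the second eigenvalue of the link walk. -/
noncomputable def gammaC (X : WSC V d) (m : ℕ) : ℝ :=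
  sSup { r : ℝ | ∃ α ∈ X.faces, α.card = m ∧ r = X.linkLam2 α }

end WSC

namespace WSC

variable {V : Type*} [DecidableEq V] [Fintype V] {d : ℕ} (X : WSC V d)

/-! ### Basic facts about the marginals `W` -/

lemma weight_nonneg (β : Finset V) : 0 ≤ X.weight β := by
  by_cases h : β ∈ X.faces ∧ β.card = d + 1
  · exact (X.weight_pos β h.1 h.2).le
  · rw [X.weight_zero β (by tauto)]

lemma Waux_nonneg (t : ℕ) (β : Finset V) : 0 ≤ X.Waux t β := by
  induction t generalizing β with
  | zero => exact X.weight_nonneg β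
  | succ t ih =>
    simp only [Waux]
    exact mul_nonneg (by positivity) (Finset.sum_nonneg fun β' _ => ih β')

lemma W_nonneg (m : ℕ) (β : Finset V) : 0 ≤ X.W m β := X.Waux_nonneg _ β

lemma W_rec (m : ℕ) (hm : m ≤ d) (α : Finset V) :
    X.W m α = (1 / ((m + 1 : ℕ) : ℝ)) *
      ∑ β ∈ X.faces.filter (fun β => α ⊆ β ∧ β.card = m + 1), X.W (m + 1) β := by
  have h1 : d + 1 - m = (d - m) + 1 := by omega
  have h2 : d + 1 - (m + 1) = d - m := by omega
  rw [W, W, h1, h2]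
  simp only [Waux]
  have h3 : d + 1 - (d - m) = m + 1 := by omega
  simp only [h3]

lemma Waux_pos (t : ℕ) (ht : t ≤ d + 1) (α : Finset V) (hα : α ∈ X.faces)
    (hc : α.card = d + 1 - t) : 0 < X.Waux t α := by
  induction t generalizing α with
  | zero => exact X.weight_pos α hα (by omega)
  | succ t ih =>
    simp only [Waux]
    have hd : 0 < ((d + 1 - t : ℕ) : ℝ) := by
      have : 0 < d + 1 - t := by omega
      exact_mod_cast this
    apply mul_pos (by positivity)
    apply Finset.sum_pos'
    · exact fun β _ => X.Waux_nonneg t β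
    · obtain ⟨τ, hτf, hsub, hτc⟩ := X.pure α hα
      obtain ⟨u, hu1, hu2, hu3⟩ := Finset.exists_subsuperset_card_eq hsub (n := 1 + α.card) (by omega) (by omega)
      refine ⟨u, Finset.mem_filter.mpr ⟨X.down_closed τ hτf u hu2, hu1, by omega⟩, ?_⟩
      exact ih (by omega) u (X.down_closed τ hτf u hu2) (by omega)

lemma W_pos (m : ℕ) (hm : m ≤ d + 1) (α : Finset V) (hα : α ∈ X.faces)
    (hc : α.card = m) : 0 < X.W m α :=
  X.Waux_pos (d + 1 - m) (by omega) α hα (by omega)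

/-! ### Inner product basics -/

lemma inn_comm (m : ℕ) (f g : Finset V → ℝ) : X.inn m f g = X.inn m g f :=
  Finset.sum_congr rfl fun α _ => by ring

lemma inn_self_nonneg (m : ℕ) (f : Finset V → ℝ) : 0 ≤ X.inn m f f :=
  Finset.sum_nonneg fun α _ => by
    have h : X.W m α * f α * f α = X.W m α * (f α) ^ 2 := by ring
    rw [h]; exact mul_nonneg (X.W_nonneg m α) (sq_nonneg _)

lemma inn_self_pos (m : ℕ) (f : Finset V → ℝ) (h : X.inn m f f ≠ 0) :
    0 < X.inn m f f := lt_of_le_of_ne (X.inn_self_nonneg m f) (Ne.symm h)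

lemma inn_congr_left (m : ℕ) (f f' g : Finset V → ℝ)
    (h : ∀ α ∈ X.faces, α.card = m → f α = f' α) : X.inn m f g = X.inn m f' g :=
  Finset.sum_congr rfl fun α hα => by
    obtain ⟨h1, h2⟩ := Finset.mem_filter.mp hα
    rw [h α h1 h2]

/-! ### Reindexing sums over faces -/

lemma mem_linkVerts {α : Finset V} {x : V} :
    x ∈ X.linkVerts α ↔ x ∉ α ∧ insert x α ∈ X.faces := by
  simp [linkVerts]

lemma filter_covers_eq_image (α : Finset V) :
    X.faces.filter (fun β => α ⊆ β ∧ β.card = α.card + 1)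
      = (X.linkVerts α).image (fun x => insert x α) := by
  ext β
  simp only [Finset.mem_filter, Finset.mem_image, mem_linkVerts X]
  constructor
  · rintro ⟨hβf, hsub, hcard⟩
    have h1 : (β \ α).card = 1 := by rw [Finset.card_sdiff_of_subset hsub]; omega
    obtain ⟨x, hx⟩ := Finset.card_eq_one.mp h1
    have hxm : x ∈ β \ α := by rw [hx]; exact Finset.mem_singleton_self x
    have hxβ : x ∈ β := (Finset.mem_sdiff.mp hxm).1
    have hxα : x ∉ α := (Finset.mem_sdiff.mp hxm).2
    have hins : insert x α ⊆ β := Finset.insert_subset hxβ hsub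
    have : β = insert x α := by
      apply (Finset.eq_of_subset_of_card_le hins ?_).symm
      rw [Finset.card_insert_of_notMem hxα]; omega
    exact ⟨x, ⟨hxα, this ▸ hβf⟩, this.symm⟩
  · rintro ⟨x, ⟨hxα, hxf⟩, rfl⟩
    exact ⟨hxf, Finset.subset_insert _ _, Finset.card_insert_of_notMem hxα⟩

lemma sum_covers (α : Finset V) (F : Finset V → ℝ) :
    ∑ β ∈ X.faces.filter (fun β => α ⊆ β ∧ β.card = α.card + 1), F β
      = ∑ x ∈ X.linkVerts α, F (insert x α) := by
  rw [X.filter_covers_eq_image α, Finset.sum_image]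
  intro x hx y hy hxy
  have hxα := ((X.mem_linkVerts).mp hx).1
  have : x ∈ insert y α := (show insert x α = insert y α from hxy) ▸ Finset.mem_insert_self x α
  rcases Finset.mem_insert.mp this with h | h
  · exact h
  · exact absurd h hxα

lemma W_rec_cov (α : Finset V) (hc : α.card ≤ d) :
    ∑ β ∈ X.faces.filter (fun β => α ⊆ β ∧ β.card = α.card + 1), X.W (α.card + 1) β
      = ((α.card : ℝ) + 1) * X.W α.card α := by
  rw [X.W_rec α.card hc α]
  have : ((α.card + 1 : ℕ) : ℝ) ≠ 0 := by positivity
  push_cast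
  field_simp

lemma W_rec_link (α : Finset V) (hc : α.card ≤ d) :
    ∑ x ∈ X.linkVerts α, X.W (α.card + 1) (insert x α)
      = ((α.card : ℝ) + 1) * X.W α.card α := by
  rw [← X.sum_covers α, X.W_rec_cov α hc]

lemma sum_pairs (m : ℕ) (G : Finset V → V → ℝ) :
    ∑ B ∈ X.faces.filter (fun B => B.card = m + 1), ∑ x ∈ B, G (B.erase x) x
      = ∑ σ ∈ X.faces.filter (fun σ => σ.card = m), ∑ x ∈ X.linkVerts σ, G σ x := by
  rw [Finset.sum_sigma', Finset.sum_sigma']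
  refine Finset.sum_nbij' (fun p => ⟨p.1.erase p.2, p.2⟩) (fun p => ⟨insert p.2 p.1, p.2⟩)
    ?_ ?_ ?_ ?_ ?_
  · rintro ⟨B, x⟩ hp
    obtain ⟨hB, hx⟩ := Finset.mem_sigma.mp hp
    obtain ⟨hBf, hBc⟩ := Finset.mem_filter.mp hB
    refine Finset.mem_sigma.mpr ⟨Finset.mem_filter.mpr ⟨?_, ?_⟩, ?_⟩
    · exact X.down_closed B hBf _ (Finset.erase_subset _ _)
    · rw [Finset.card_erase_of_mem hx, hBc]; omega
    · exact (X.mem_linkVerts).mpr ⟨Finset.notMem_erase _ _,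
        by rw [Finset.insert_erase hx]; exact hBf⟩
  · rintro ⟨σ, x⟩ hp
    obtain ⟨hσ, hx⟩ := Finset.mem_sigma.mp hp
    obtain ⟨hσf, hσc⟩ := Finset.mem_filter.mp hσ
    obtain ⟨hxσ, hxf⟩ := (X.mem_linkVerts).mp hx
    refine Finset.mem_sigma.mpr ⟨Finset.mem_filter.mpr ⟨hxf, ?_⟩, Finset.mem_insert_self _ _⟩
    rw [Finset.card_insert_of_notMem hxσ, hσc]
  · rintro ⟨B, x⟩ hp
    obtain ⟨hB, hx⟩ := Finset.mem_sigma.mp hp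
    simp only [Sigma.mk.inj_iff, heq_eq_eq, and_true]
    exact Finset.insert_erase hx
  · rintro ⟨σ, x⟩ hp
    obtain ⟨hσ, hx⟩ := Finset.mem_sigma.mp hp
    obtain ⟨hxσ, _⟩ := (X.mem_linkVerts).mp hx
    simp only [Sigma.mk.inj_iff, heq_eq_eq, and_true]
    exact Finset.erase_insert hxσ
  · rintro ⟨B, x⟩ _
    rfl

lemma sum_pairs' (m : ℕ) (F : Finset V → Finset V → ℝ) :
    ∑ B ∈ X.faces.filter (fun B => B.card = m + 1), ∑ x ∈ B, F (B.erase x) B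
      = ∑ σ ∈ X.faces.filter (fun σ => σ.card = m),
          ∑ β ∈ X.faces.filter (fun β => σ ⊆ β ∧ β.card = σ.card + 1), F σ β := by
  have h := X.sum_pairs m (fun σ x => F σ (insert x σ))
  have h1 : ∑ B ∈ X.faces.filter (fun B => B.card = m + 1), ∑ x ∈ B, F (B.erase x) B
      = ∑ B ∈ X.faces.filter (fun B => B.card = m + 1), ∑ x ∈ B,
          F (B.erase x) (insert x (B.erase x)) := by
    apply Finset.sum_congr rfl
    intro B _
    apply Finset.sum_congr rfl
    intro x hx
    rw [Finset.insert_erase hx]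
  rw [h1, h]
  apply Finset.sum_congr rfl
  intro σ _
  rw [X.sum_covers σ]

/-! ### Cauchy-Schwarz -/

lemma weighted_cs {ι : Type*} (s : Finset ι) (w f g : ι → ℝ) (hw : ∀ i ∈ s, 0 ≤ w i) :
    (∑ i ∈ s, w i * f i * g i) ^ 2
      ≤ (∑ i ∈ s, w i * f i * f i) * ∑ i ∈ s, w i * g i * g i := by
  have h := Finset.sum_mul_sq_le_sq_mul_sq s (fun i => Real.sqrt (w i) * f i)
    (fun i => Real.sqrt (w i) * g i)
  have hsq : ∀ i ∈ s, Real.sqrt (w i) * Real.sqrt (w i) = w i :=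
    fun i hi => Real.mul_self_sqrt (hw i hi)
  have e1 : ∀ i ∈ s, Real.sqrt (w i) * f i * (Real.sqrt (w i) * g i) = w i * f i * g i := by
    intro i hi
    calc Real.sqrt (w i) * f i * (Real.sqrt (w i) * g i)
        = Real.sqrt (w i) * Real.sqrt (w i) * (f i * g i) := by ring
      _ = w i * f i * g i := by rw [hsq i hi]; ring
  have e2 : ∀ i ∈ s, (Real.sqrt (w i) * f i) ^ 2 = w i * f i * f i := by
    intro i hi
    calc (Real.sqrt (w i) * f i) ^ 2 = Real.sqrt (w i) * Real.sqrt (w i) * (f i * f i) := by ring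
      _ = w i * f i * f i := by rw [hsq i hi]; ring
  have e3 : ∀ i ∈ s, (Real.sqrt (w i) * g i) ^ 2 = w i * g i * g i := by
    intro i hi
    calc (Real.sqrt (w i) * g i) ^ 2 = Real.sqrt (w i) * Real.sqrt (w i) * (g i * g i) := by ring
      _ = w i * g i * g i := by rw [hsq i hi]; ring
  rw [Finset.sum_congr rfl e1, Finset.sum_congr rfl e2, Finset.sum_congr rfl e3] at h
  exact h

lemma jensen_sq {ι : Type*} (s : Finset ι) (c g : ι → ℝ) (hc : ∀ i ∈ s, 0 ≤ c i)
    (h1 : ∑ i ∈ s, c i = 1) :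
    (∑ i ∈ s, c i * g i) ^ 2 ≤ ∑ i ∈ s, c i * (g i * g i) := by
  have h := weighted_cs s c (fun _ => 1) g hc
  simp only [mul_one, one_mul] at h
  rw [h1, one_mul] at h
  calc (∑ i ∈ s, c i * g i) ^ 2 ≤ ∑ i ∈ s, c i * g i * g i := h
    _ = ∑ i ∈ s, c i * (g i * g i) := Finset.sum_congr rfl fun i _ => by ring

lemma inn_cs (m : ℕ) (f g : Finset V → ℝ) :
    (X.inn m f g) ^ 2 ≤ X.inn m f f * X.inn m g g :=
  weighted_cs _ _ _ _ (fun α _ => X.W_nonneg m α)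

/-! ### Up/down operator basics -/

lemma upOp_one_eval (β : Finset V) (hβ : β.Nonempty) :
    upOp (fun _ => (1 : ℝ)) β = 1 := by
  unfold upOp
  rw [Finset.sum_const, nsmul_eq_mul, mul_one]
  have h : (β.card : ℝ) ≠ 0 := by
    have := Finset.card_pos.mpr hβ
    positivity
  field_simp

lemma downOp_one_eval (α : Finset V) (hα : α ∈ X.faces) (hc : α.card ≤ d) :
    X.downOp (fun _ => (1 : ℝ)) α = 1 := by
  unfold downOp
  simp only [mul_one]
  rw [← Finset.sum_div, X.W_rec_cov α hc]
  have h1 : (0 : ℝ) < (α.card : ℝ) + 1 := by positivity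
  have h2 := X.W_pos α.card (by omega) α hα rfl
  field_simp

/-! ### Adjointness -/

lemma inn_up_down (m : ℕ) (hm : m ≤ d) (f g : Finset V → ℝ) :
    X.inn (m + 1) (upOp f) g = X.inn m f (X.downOp g) := by
  have key := X.sum_pairs m (fun σ x =>
    (1 / ((m : ℝ) + 1)) * X.W (m + 1) (insert x σ) * f σ * g (insert x σ))
  unfold inn
  have e0 : ∀ B ∈ X.faces.filter (fun B => B.card = m + 1),
      X.W (m + 1) B * upOp f B * g B
        = ∑ x ∈ B, (1 / ((m : ℝ) + 1)) * X.W (m + 1) (insert x (B.erase x)) * f (B.erase x)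
            * g (insert x (B.erase x)) := by
    intro B hB
    obtain ⟨hBf, hBc⟩ := Finset.mem_filter.mp hB
    have e1 : upOp f B = (1 / ((m : ℝ) + 1)) * ∑ x ∈ B, f (B.erase x) := by
      unfold upOp
      rw [hBc]
      push_cast
      ring
    rw [e1]
    rw [Finset.sum_congr rfl (fun x hx => by rw [Finset.insert_erase hx] :
      ∀ x ∈ B, (1 / ((m : ℝ) + 1)) * X.W (m + 1) (insert x (B.erase x)) * f (B.erase x)
          * g (insert x (B.erase x))
        = (1 / ((m : ℝ) + 1)) * X.W (m + 1) B * f (B.erase x) * g B)]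
    simp only [Finset.mul_sum, Finset.sum_mul]
    exact Finset.sum_congr rfl fun x hx => by ring
  rw [Finset.sum_congr rfl e0, key]
  apply Finset.sum_congr rfl
  intro σ hσ
  obtain ⟨hσf, hσc⟩ := Finset.mem_filter.mp hσ
  rw [← X.sum_covers σ (fun β => (1 / ((m : ℝ) + 1)) * X.W (m + 1) β * f σ * g β)]
  unfold downOp
  rw [Finset.mul_sum]
  apply Finset.sum_congr rfl
  intro β hβ
  have h2 := X.W_pos m (by omega) σ hσf hσc
  have h3 : X.W m σ ≠ 0 := ne_of_gt h2
  have h4 : ((m : ℝ) + 1) ≠ 0 := by positivity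
  simp only [hσc]
  field_simp

/-! ### Contraction -/

lemma down_contract (m : ℕ) (hm : m ≤ d) (g : Finset V → ℝ) :
    X.inn m (X.downOp g) (X.downOp g) ≤ X.inn (m + 1) g g := by
  have key := X.sum_pairs' m (fun σ β => X.W (m + 1) β * (g β * g β) / ((m : ℝ) + 1))
  unfold inn
  have total : ∑ σ ∈ X.faces.filter (fun σ => σ.card = m),
      ∑ β ∈ X.faces.filter (fun β => σ ⊆ β ∧ β.card = σ.card + 1),
        X.W (m + 1) β * (g β * g β) / ((m : ℝ) + 1)
      = ∑ B ∈ X.faces.filter (fun B => B.card = m + 1), X.W (m + 1) B * g B * g B := by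
    rw [← key]
    apply Finset.sum_congr rfl
    intro B hB
    obtain ⟨hBf, hBc⟩ := Finset.mem_filter.mp hB
    rw [Finset.sum_const, hBc, nsmul_eq_mul]
    have h4 : ((m : ℝ) + 1) ≠ 0 := by positivity
    push_cast
    field_simp
  rw [← total]
  apply Finset.sum_le_sum
  intro σ hσ
  obtain ⟨hσf, hσc⟩ := Finset.mem_filter.mp hσ
  have hmd : σ.card ≤ d := by omega
  have hWσ := X.W_pos σ.card (by omega) σ hσf rfl
  simp only [← hσc]
  have hd : X.downOp g σ = ∑ β ∈ X.faces.filter (fun β => σ ⊆ β ∧ β.card = σ.card + 1),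
      (X.W (σ.card + 1) β / (((σ.card : ℝ) + 1) * X.W σ.card σ)) * g β := by
    unfold downOp
    exact Finset.sum_congr rfl fun β _ => by ring
  have hcpos : ∀ β ∈ X.faces.filter (fun β => σ ⊆ β ∧ β.card = σ.card + 1),
      0 ≤ X.W (σ.card + 1) β / (((σ.card : ℝ) + 1) * X.W σ.card σ) := by
    intro β _
    exact div_nonneg (X.W_nonneg _ _) (by positivity)
  have h1 : ∑ β ∈ X.faces.filter (fun β => σ ⊆ β ∧ β.card = σ.card + 1),
      X.W (σ.card + 1) β / (((σ.card : ℝ) + 1) * X.W σ.card σ) = 1 := by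
    rw [← Finset.sum_div, X.W_rec_cov σ hmd]
    field_simp
  have hj := jensen_sq _ _ g hcpos h1
  calc X.W σ.card σ * X.downOp g σ * X.downOp g σ
      = X.W σ.card σ * (X.downOp g σ) ^ 2 := by ring
    _ = X.W σ.card σ * (∑ β ∈ X.faces.filter (fun β => σ ⊆ β ∧ β.card = σ.card + 1),
          (X.W (σ.card + 1) β / (((σ.card : ℝ) + 1) * X.W σ.card σ)) * g β) ^ 2 := by rw [hd]
    _ ≤ X.W σ.card σ * ∑ β ∈ X.faces.filter (fun β => σ ⊆ β ∧ β.card = σ.card + 1),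
          (X.W (σ.card + 1) β / (((σ.card : ℝ) + 1) * X.W σ.card σ)) * (g β * g β) :=
        mul_le_mul_of_nonneg_left hj hWσ.le
    _ = ∑ β ∈ X.faces.filter (fun β => σ ⊆ β ∧ β.card = σ.card + 1),
          X.W (σ.card + 1) β * (g β * g β) / ((σ.card : ℝ) + 1) := by
        rw [Finset.mul_sum]
        apply Finset.sum_congr rfl
        intro β _
        have h5 : X.W σ.card σ ≠ 0 := ne_of_gt hWσ
        have h6 : ((σ.card : ℝ) + 1) ≠ 0 := by positivity
        field_simp

lemma up_contract (m : ℕ) (hm : m ≤ d) (f : Finset V → ℝ) :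
    X.inn (m + 1) (upOp f) (upOp f) ≤ X.inn m f f := by
  have key := X.sum_pairs m (fun σ x =>
    (1 / ((m : ℝ) + 1)) * X.W (m + 1) (insert x σ) * (f σ * f σ))
  unfold inn
  have step1 : ∀ B ∈ X.faces.filter (fun B => B.card = m + 1),
      X.W (m + 1) B * upOp f B * upOp f B
        ≤ ∑ x ∈ B, (1 / ((m : ℝ) + 1)) * X.W (m + 1) (insert x (B.erase x))
            * (f (B.erase x) * f (B.erase x)) := by
    intro B hB
    obtain ⟨hBf, hBc⟩ := Finset.mem_filter.mp hB
    have e1 : upOp f B = (1 / ((m : ℝ) + 1)) * ∑ x ∈ B, f (B.erase x) := by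
      unfold upOp
      rw [hBc]
      push_cast
      ring
    have e2 : ∀ x ∈ B, (1 / ((m : ℝ) + 1)) * X.W (m + 1) (insert x (B.erase x))
        * (f (B.erase x) * f (B.erase x))
        = (1 / ((m : ℝ) + 1)) * X.W (m + 1) B * (f (B.erase x) * f (B.erase x)) := by
      intro x hx
      rw [Finset.insert_erase hx]
    rw [Finset.sum_congr rfl e2]
    have hsq : (∑ x ∈ B, f (B.erase x)) ^ 2 ≤ ((m : ℝ) + 1) * ∑ x ∈ B, f (B.erase x) ^ 2 := by
      have h := sq_sum_le_card_mul_sum_sq (s := B) (f := fun x => f (B.erase x))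
      rw [hBc] at h
      push_cast at h
      exact h
    have hWnn := X.W_nonneg (m + 1) B
    have h4 : (0 : ℝ) < (m : ℝ) + 1 := by positivity
    calc X.W (m + 1) B * upOp f B * upOp f B
        = X.W (m + 1) B / (((m : ℝ) + 1) ^ 2) * (∑ x ∈ B, f (B.erase x)) ^ 2 := by
          rw [e1]; field_simp
      _ ≤ X.W (m + 1) B / (((m : ℝ) + 1) ^ 2) * (((m : ℝ) + 1) * ∑ x ∈ B, f (B.erase x) ^ 2) := by
          apply mul_le_mul_of_nonneg_left hsq (by positivity)
      _ = ∑ x ∈ B, (1 / ((m : ℝ) + 1)) * X.W (m + 1) B * (f (B.erase x) * f (B.erase x)) := by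
          rw [Finset.mul_sum, Finset.mul_sum]
          apply Finset.sum_congr rfl
          intro x _
          field_simp
  calc ∑ B ∈ X.faces.filter (fun B => B.card = m + 1), X.W (m + 1) B * upOp f B * upOp f B
      ≤ ∑ B ∈ X.faces.filter (fun B => B.card = m + 1), ∑ x ∈ B,
          (1 / ((m : ℝ) + 1)) * X.W (m + 1) (insert x (B.erase x))
            * (f (B.erase x) * f (B.erase x)) := Finset.sum_le_sum step1
    _ = ∑ σ ∈ X.faces.filter (fun σ => σ.card = m), ∑ x ∈ X.linkVerts σ,
          (1 / ((m : ℝ) + 1)) * X.W (m + 1) (insert x σ) * (f σ * f σ) := key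
    _ = ∑ σ ∈ X.faces.filter (fun σ => σ.card = m), X.W m σ * f σ * f σ := by
        apply Finset.sum_congr rfl
        intro σ hσ
        obtain ⟨hσf, hσc⟩ := Finset.mem_filter.mp hσ
        have hmd : σ.card ≤ d := by omega
        have h5 := X.W_rec_link σ hmd
        calc ∑ x ∈ X.linkVerts σ, (1 / ((m : ℝ) + 1)) * X.W (m + 1) (insert x σ) * (f σ * f σ)
            = (1 / ((m : ℝ) + 1)) * (f σ * f σ)
                * ∑ x ∈ X.linkVerts σ, X.W (σ.card + 1) (insert x σ) := by
              rw [Finset.mul_sum]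
              exact Finset.sum_congr rfl fun x _ => by rw [hσc]; ring
          _ = (1 / ((m : ℝ) + 1)) * (f σ * f σ) * (((σ.card : ℝ) + 1) * X.W σ.card σ) := by
              rw [h5]
          _ = X.W m σ * f σ * f σ := by
              rw [hσc]
              have h4 : ((m : ℝ) + 1) ≠ 0 := by positivity
              field_simp

/-! ### lam2 generic lemmas -/

lemma lam2_le (m : ℕ) (M : (Finset V → ℝ) → Finset V → ℝ) (B : ℝ) (hB : 0 ≤ B)
    (h : ∀ f : Finset V → ℝ, X.inn m f (fun _ => 1) = 0 → X.inn m f f ≠ 0 →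
      X.inn m f (M f) ≤ B * X.inn m f f) :
    X.lam2 m M ≤ B := by
  apply Real.sSup_le _ hB
  rintro r ⟨f, h1, h2, rfl⟩
  rw [div_le_iff₀ (X.inn_self_pos m f h2)]
  exact h f h1 h2

lemma lam2_bdd (m : ℕ) (M : (Finset V → ℝ) → Finset V → ℝ) (C : ℝ)
    (h : ∀ f : Finset V → ℝ, X.inn m f (fun _ => 1) = 0 → X.inn m f f ≠ 0 →
      X.inn m f (M f) ≤ C * X.inn m f f) :
    BddAbove { r : ℝ | ∃ f : Finset V → ℝ,
      X.inn m f (fun _ => 1) = 0 ∧ X.inn m f f ≠ 0 ∧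
      r = X.inn m f (M f) / X.inn m f f } := by
  refine ⟨C, ?_⟩
  rintro r ⟨f, h1, h2, rfl⟩
  rw [div_le_iff₀ (X.inn_self_pos m f h2)]
  exact h f h1 h2

lemma rayleigh_le_lam2 (m : ℕ) (M : (Finset V → ℝ) → Finset V → ℝ)
    (hb : BddAbove { r : ℝ | ∃ f : Finset V → ℝ,
      X.inn m f (fun _ => 1) = 0 ∧ X.inn m f f ≠ 0 ∧
      r = X.inn m f (M f) / X.inn m f f })
    (f : Finset V → ℝ) (h1 : X.inn m f (fun _ => 1) = 0) (h2 : X.inn m f f ≠ 0) :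
    X.inn m f (M f) / X.inn m f f ≤ X.lam2 m M :=
  le_csSup hb ⟨f, h1, h2, rfl⟩

lemma lam2_nonneg (m : ℕ) (M : (Finset V → ℝ) → Finset V → ℝ)
    (h : ∀ f : Finset V → ℝ, X.inn m f (fun _ => 1) = 0 → X.inn m f f ≠ 0 →
      0 ≤ X.inn m f (M f)) :
    0 ≤ X.lam2 m M := by
  apply Real.sSup_nonneg
  rintro r ⟨f, h1, h2, rfl⟩
  exact div_nonneg (h f h1 h2) (X.inn_self_nonneg m f)

/-! ### Rayleigh quotient identities -/

lemma inn_downUp (m : ℕ) (hm : m ≤ d) (f : Finset V → ℝ) :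
    X.inn (m + 1) f (X.downUp f) = X.inn m (X.downOp f) (X.downOp f) := by
  unfold downUp
  rw [X.inn_comm (m + 1) f _, X.inn_up_down m hm (X.downOp f) f]

lemma inn_upDown (m : ℕ) (hm : m ≤ d) (f : Finset V → ℝ) :
    X.inn m f (X.upDown f) = X.inn (m + 1) (upOp f) (upOp f) := by
  unfold upDown
  rw [← X.inn_up_down m hm f (upOp f)]

lemma lam2_downUp_nonneg (m : ℕ) (hmd : m ≤ d) : 0 ≤ X.lam2 (m + 1) X.downUp :=
  X.lam2_nonneg _ _ fun f _ _ => by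
    rw [X.inn_downUp m hmd]; exact X.inn_self_nonneg _ _

lemma lam2_upDown_nonneg (m : ℕ) (hmd : m ≤ d) : 0 ≤ X.lam2 m X.upDown :=
  X.lam2_nonneg _ _ fun f _ _ => by
    rw [X.inn_upDown m hmd]; exact X.inn_self_nonneg _ _

lemma downUp_bdd (m : ℕ) (hmd : m ≤ d) :
    BddAbove { r : ℝ | ∃ f : Finset V → ℝ,
      X.inn (m + 1) f (fun _ => 1) = 0 ∧ X.inn (m + 1) f f ≠ 0 ∧
      r = X.inn (m + 1) f (X.downUp f) / X.inn (m + 1) f f } :=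
  X.lam2_bdd (m + 1) X.downUp 1 fun f _ _ => by
    rw [X.inn_downUp m hmd, one_mul]; exact X.down_contract m hmd f

lemma upDown_bdd (m : ℕ) (hmd : m ≤ d) :
    BddAbove { r : ℝ | ∃ f : Finset V → ℝ,
      X.inn m f (fun _ => 1) = 0 ∧ X.inn m f f ≠ 0 ∧
      r = X.inn m f (X.upDown f) / X.inn m f f } :=
  X.lam2_bdd m X.upDown 1 fun f _ _ => by
    rw [X.inn_upDown m hmd, one_mul]; exact X.up_contract m hmd f

lemma downOp_orth (m : ℕ) (hmd : m ≤ d) (f : Finset V → ℝ)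
    (h : X.inn (m + 1) f (fun _ => 1) = 0) :
    X.inn m (X.downOp f) (fun _ => 1) = 0 := by
  rw [X.inn_comm, ← X.inn_up_down m hmd]
  rw [X.inn_congr_left (m + 1) (upOp (fun _ => 1)) (fun _ => 1) f ?_]
  · rw [X.inn_comm]; exact h
  · intro B _ hBc
    exact upOp_one_eval B (Finset.card_pos.mp (by omega))

lemma upOp_orth (m : ℕ) (hmd : m ≤ d) (f : Finset V → ℝ)
    (h : X.inn m f (fun _ => 1) = 0) :
    X.inn (m + 1) (upOp f) (fun _ => 1) = 0 := by
  rw [X.inn_up_down m hmd, X.inn_comm]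
  rw [X.inn_congr_left m (X.downOp (fun _ => 1)) (fun _ => 1) f ?_]
  · rw [X.inn_comm]; exact h
  · intro α hα hαc
    exact X.downOp_one_eval α hα (by omega)

/-! ### Part I: equality of the two walks' second eigenvalues -/

lemma lam2_eq (m : ℕ) (hmd : m ≤ d) :
    X.lam2 (m + 1) X.downUp = X.lam2 m X.upDown := by
  apply le_antisymm
  · apply Real.sSup_le _ (X.lam2_upDown_nonneg m hmd)
    rintro r ⟨f, h1, h2, rfl⟩
    have hnum : X.inn (m + 1) f (X.downUp f) = X.inn m (X.downOp f) (X.downOp f) :=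
      X.inn_downUp m hmd f
    by_cases hz : X.inn m (X.downOp f) (X.downOp f) = 0
    · rw [hnum, hz, zero_div]; exact X.lam2_upDown_nonneg m hmd
    · set g := X.downOp f with hg
      have horth : X.inn m g (fun _ => 1) = 0 := X.downOp_orth m hmd f h1
      have hfpos := X.inn_self_pos (m + 1) f h2
      have hgpos := X.inn_self_pos m g hz
      have hUg : X.inn (m + 1) (upOp g) f = X.inn m g g := by
        rw [X.inn_up_down m hmd]
      have hr : X.inn m g (X.upDown g) = X.inn (m + 1) (upOp g) (upOp g) := X.inn_upDown m hmd g
      have step : X.inn m g g / X.inn (m + 1) f f ≤ X.inn m g (X.upDown g) / X.inn m g g := by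
        rw [hr, div_le_div_iff₀ hfpos hgpos]
        calc X.inn m g g * X.inn m g g = (X.inn (m + 1) (upOp g) f) ^ 2 := by rw [hUg]; ring
          _ ≤ X.inn (m + 1) (upOp g) (upOp g) * X.inn (m + 1) f f := X.inn_cs _ _ _
      calc X.inn (m + 1) f (X.downUp f) / X.inn (m + 1) f f
          = X.inn m g g / X.inn (m + 1) f f := by rw [hnum]
        _ ≤ X.inn m g (X.upDown g) / X.inn m g g := step
        _ ≤ X.lam2 m X.upDown :=
            X.rayleigh_le_lam2 m X.upDown (X.upDown_bdd m hmd) g horth hz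
  · apply Real.sSup_le _ (X.lam2_downUp_nonneg m hmd)
    rintro r ⟨g, h1, h2, rfl⟩
    have hnum : X.inn m g (X.upDown g) = X.inn (m + 1) (upOp g) (upOp g) := X.inn_upDown m hmd g
    by_cases hz : X.inn (m + 1) (upOp g) (upOp g) = 0
    · rw [hnum, hz, zero_div]; exact X.lam2_downUp_nonneg m hmd
    · set f := upOp g with hf
      have horth : X.inn (m + 1) f (fun _ => 1) = 0 := X.upOp_orth m hmd g h1
      have hgpos := X.inn_self_pos m g h2
      have hfpos := X.inn_self_pos (m + 1) f hz
      have hDf : X.inn m g (X.downOp f) = X.inn (m + 1) f f := by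
        rw [← X.inn_up_down m hmd]
      have step : X.inn (m + 1) f f / X.inn m g g
          ≤ X.inn (m + 1) f (X.downUp f) / X.inn (m + 1) f f := by
        rw [X.inn_downUp m hmd f, div_le_div_iff₀ hgpos hfpos]
        calc X.inn (m + 1) f f * X.inn (m + 1) f f = (X.inn m g (X.downOp f)) ^ 2 := by
              rw [hDf]; ring
          _ ≤ X.inn m g g * X.inn m (X.downOp f) (X.downOp f) := X.inn_cs _ _ _
          _ = X.inn m (X.downOp f) (X.downOp f) * X.inn m g g := by ring
      calc X.inn m g (X.upDown g) / X.inn m g g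
          = X.inn (m + 1) f f / X.inn m g g := by rw [hnum]
        _ ≤ X.inn (m + 1) f (X.downUp f) / X.inn (m + 1) f f := step
        _ ≤ X.lam2 (m + 1) X.downUp :=
            X.rayleigh_le_lam2 (m + 1) X.downUp (X.downUp_bdd m hmd) f horth hz

/-! ### Base case -/

lemma lam2_one_downUp_nonpos : X.lam2 1 X.downUp ≤ 0 := by
  apply Real.sSup_le _ le_rfl
  rintro r ⟨f, h1, h2, rfl⟩
  have hd0 : X.downOp f ∅ = 0 := by
    unfold downOp
    have hfe : X.faces.filter (fun β => ∅ ⊆ β ∧ β.card = Finset.card (∅ : Finset V) + 1)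
        = X.faces.filter (fun β => β.card = 1) := by
      apply Finset.filter_congr
      intro β _
      simp
    rw [hfe]
    simp only [Finset.card_empty]
    rw [← Finset.sum_div]
    have h1' : ∑ β ∈ X.faces.filter (fun β => β.card = 1), X.W 1 β * f β = 0 := by
      have := h1
      unfold inn at this
      simpa [mul_one] using this
    have : ∑ β ∈ X.faces.filter (fun β => β.card = 1), X.W (0 + 1) β * f β = 0 := by
      simpa using h1'
    rw [this, zero_div]
  have hnum : X.inn (0 + 1) f (X.downUp f) = X.inn 0 (X.downOp f) (X.downOp f) :=
    X.inn_downUp 0 (Nat.zero_le d) f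
  have hz : X.inn 0 (X.downOp f) (X.downOp f) = 0 := by
    unfold inn
    apply Finset.sum_eq_zero
    intro α hα
    obtain ⟨-, hc⟩ := Finset.mem_filter.mp hα
    have : α = ∅ := Finset.card_eq_zero.mp hc
    rw [this, hd0]
    ring
  have : X.inn 1 f (X.downUp f) = 0 := by
    rw [show (1 : ℕ) = 0 + 1 from rfl, hnum, hz]
  rw [this, zero_div]

/-! ### Link basics -/

lemma linkPi_nonneg (α τ : Finset V) : 0 ≤ X.linkPi α τ :=
  div_nonneg (X.W_nonneg _ _) (mul_nonneg (Nat.cast_nonneg _) (X.W_nonneg _ _))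

lemma linkPi_single (α : Finset V) (x : V) (hx : x ∉ α) :
    X.linkPi α {x} = X.W (α.card + 1) (insert x α) / (((α.card : ℝ) + 1) * X.W α.card α) := by
  unfold linkPi
  have hu1 : α ∪ {x} = insert x α := by
    ext a; simp [Finset.mem_union, Finset.mem_insert]
  rw [hu1, Finset.card_insert_of_notMem hx, Nat.choose_succ_self_right]
  push_cast
  ring_nf

lemma choose_two_cast (p : ℕ) :
    ((Nat.choose (p + 2) p : ℕ) : ℝ) = ((p : ℝ) + 2) * ((p : ℝ) + 1) / 2 := by
  have h1 : Nat.choose (p + 2) p = Nat.choose (p + 2) 2 := by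
    rw [← Nat.choose_symm (by omega)]
    congr 1
    omega
  have h2 : Nat.choose (p + 2) 2 * 2 = (p + 2) * (p + 1) := by
    rw [Nat.choose_two_right]
    apply Nat.div_mul_cancel
    have : Even ((p + 1) * (p + 2)) := Nat.even_mul_succ_self (p + 1)
    have h0 : p + 2 - 1 = p + 1 := by omega
    have h3 : (p + 2) * (p + 2 - 1) = (p + 1) * (p + 2) := by rw [h0]; ring
    rw [h3]
    exact this.two_dvd
  have h4 : ((Nat.choose (p + 2) 2 * 2 : ℕ) : ℝ) = ((p : ℝ) + 2) * ((p : ℝ) + 1) := by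
    rw [h2]; push_cast; ring
  push_cast at h4 ⊢
  rw [h1]
  linarith

lemma linkPi_pair (α : Finset V) (x y : V) (hx : x ∉ α) (hy : y ∉ α) (hxy : x ≠ y) :
    X.linkPi α {x, y} = 2 * X.W (α.card + 2) (insert y (insert x α))
      / ((((α.card : ℝ) + 2) * ((α.card : ℝ) + 1)) * X.W α.card α) := by
  unfold linkPi
  have hu : α ∪ {x, y} = insert y (insert x α) := by
    ext a; simp [Finset.mem_insert, Finset.mem_union]; tauto
  have hyn : y ∉ insert x α := by
    simp only [Finset.mem_insert, not_or]
    exact ⟨fun h => hxy h.symm, hy⟩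
  have hxn : x ∉ α := hx
  have hc : (insert y (insert x α)).card = α.card + 2 := by
    rw [Finset.card_insert_of_notMem hyn, Finset.card_insert_of_notMem hxn]
  rw [hu, hc, choose_two_cast]
  rcases eq_or_ne (X.W α.card α) 0 with h0 | h0
  · rw [h0]; simp
  · have h1 : ((α.card : ℝ) + 1) ≠ 0 := by positivity
    have h2 : ((α.card : ℝ) + 2) ≠ 0 := by positivity
    field_simp

lemma linkVerts_insert (α : Finset V) (x : V) :
    (X.linkVerts α).filter (fun y => y ≠ x ∧ insert y (insert x α) ∈ X.faces)
      = X.linkVerts (insert x α) := by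
  ext y
  simp only [Finset.mem_filter, mem_linkVerts, Finset.mem_insert, not_or]
  constructor
  · rintro ⟨⟨hyα, _⟩, hyx, hyins⟩
    exact ⟨⟨hyx, hyα⟩, hyins⟩
  · rintro ⟨⟨hyx, hyα⟩, hyins⟩
    refine ⟨⟨hyα, ?_⟩, hyx, hyins⟩
    apply X.down_closed _ hyins
    intro z hz
    simp only [Finset.mem_insert] at hz ⊢
    tauto

lemma linkVerts_mem_faces (α : Finset V) (x : V) (hx : x ∈ X.linkVerts α) :
    insert x α ∈ X.faces := ((X.mem_linkVerts).mp hx).2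

lemma linkVerts_not_mem (α : Finset V) (x : V) (hx : x ∈ X.linkVerts α) : x ∉ α :=
  ((X.mem_linkVerts).mp hx).1

lemma card_insert_lv (α : Finset V) (x : V) (hx : x ∈ X.linkVerts α) :
    (insert x α).card = α.card + 1 :=
  Finset.card_insert_of_notMem (X.linkVerts_not_mem α x hx)

lemma linkPi_single_pos (α : Finset V) (hα : α ∈ X.faces) (hcard : α.card ≤ d)
    (x : V) (hx : x ∈ X.linkVerts α) : 0 < X.linkPi α {x} := by
  rw [X.linkPi_single α x (X.linkVerts_not_mem α x hx)]
  apply div_pos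
  · exact X.W_pos _ (by omega) _ (X.linkVerts_mem_faces α x hx)
      (X.card_insert_lv α x hx)
  · have := X.W_pos α.card (by omega) α hα rfl
    positivity

lemma walk_entry (α : Finset V) (hα : α ∈ X.faces) (hcard : α.card + 1 ≤ d)
    (x : V) (hx : x ∈ X.linkVerts α) (y : V) (hy : y ∈ X.linkVerts (insert x α)) :
    X.linkPi α {x, y} / (2 * X.linkPi α {x}) = X.linkPi (insert x α) {y} := by
  have hxα := X.linkVerts_not_mem α x hx
  have hyins := X.linkVerts_not_mem _ y hy
  have hyα : y ∉ α := fun h => hyins (Finset.mem_insert_of_mem h)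
  have hxy : x ≠ y := fun h => hyins (h ▸ Finset.mem_insert_self x α)
  have hWα := X.W_pos α.card (by omega) α hα rfl
  have hWαx := X.W_pos (α.card + 1) (by omega) (insert x α) (X.linkVerts_mem_faces α x hx)
    (X.card_insert_lv α x hx)
  have hπx := X.linkPi_single_pos α hα (by omega) x hx
  rw [X.linkPi_pair α x y hxα hyα hxy, X.linkPi_single α x hxα,
    X.linkPi_single (insert x α) y hyins, X.card_insert_lv α x hx]
  have h1 : ((α.card : ℝ) + 1) ≠ 0 := by positivity
  have h2 : ((α.card : ℝ) + 2) ≠ 0 := by positivity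
  have h3 : X.W α.card α ≠ 0 := ne_of_gt hWα
  have h4 : X.W (α.card + 1) (insert x α) ≠ 0 := ne_of_gt hWαx
  have h5 : (α.card : ℝ) + 1 + 1 = (α.card : ℝ) + 2 := by ring
  push_cast
  rw [h5]
  field_simp

lemma linkWalk_eq (α : Finset V) (hα : α ∈ X.faces) (hcard : α.card + 1 ≤ d) (g : V → ℝ)
    (x : V) (hx : x ∈ X.linkVerts α) :
    X.linkWalk α g x = ∑ y ∈ X.linkVerts (insert x α), X.linkPi (insert x α) {y} * g y := by
  unfold linkWalk
  rw [X.linkVerts_insert α x]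
  apply Finset.sum_congr rfl
  intro y hy
  rw [X.walk_entry α hα hcard x hx y hy]

lemma linkPi_single_sum (α : Finset V) (hα : α ∈ X.faces) (hcard : α.card ≤ d) :
    ∑ x ∈ X.linkVerts α, X.linkPi α {x} = 1 := by
  have e : ∀ x ∈ X.linkVerts α, X.linkPi α {x}
      = X.W (α.card + 1) (insert x α) / (((α.card : ℝ) + 1) * X.W α.card α) :=
    fun x hx => X.linkPi_single α x (X.linkVerts_not_mem α x hx)
  rw [Finset.sum_congr rfl e, ← Finset.sum_div, X.W_rec_link α hcard]
  have hWα := X.W_pos α.card (by omega) α hα rfl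
  have h1 : ((α.card : ℝ) + 1) ≠ 0 := by positivity
  field_simp

lemma linkWalk_const (α : Finset V) (hα : α ∈ X.faces) (hcard : α.card + 1 ≤ d) (c : ℝ)
    (x : V) (hx : x ∈ X.linkVerts α) : X.linkWalk α (fun _ => c) x = c := by
  rw [X.linkWalk_eq α hα hcard _ x hx]
  have h := X.linkPi_single_sum (insert x α) (X.linkVerts_mem_faces α x hx)
    (by rw [X.card_insert_lv α x hx]; omega)
  calc ∑ y ∈ X.linkVerts (insert x α), X.linkPi (insert x α) {y} * c
      = (∑ y ∈ X.linkVerts (insert x α), X.linkPi (insert x α) {y}) * c := by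
        rw [Finset.sum_mul]
    _ = c := by rw [h, one_mul]

/-! ### Link sum swaps -/

lemma link_pair_mem_iff (α : Finset V) (x y : V) :
    (x ∈ X.linkVerts α ∧ y ∈ X.linkVerts (insert x α)) ↔
      (y ∈ X.linkVerts α ∧ x ∈ X.linkVerts (insert y α)) := by
  have dir : ∀ u v : V, (u ∈ X.linkVerts α ∧ v ∈ X.linkVerts (insert u α)) →
      (v ∈ X.linkVerts α ∧ u ∈ X.linkVerts (insert v α)) := by
    intro u v ⟨hu, hv⟩
    have huα := X.linkVerts_not_mem α u hu
    have hvins := X.linkVerts_not_mem _ v hv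
    have hvα : v ∉ α := fun h => hvins (Finset.mem_insert_of_mem h)
    have huv : u ≠ v := fun h => hvins (h ▸ Finset.mem_insert_self u α)
    have hbig := X.linkVerts_mem_faces _ v hv
    have hbig' : insert u (insert v α) ∈ X.faces := by
      rwa [Finset.insert_comm]
    constructor
    · exact (X.mem_linkVerts).mpr ⟨hvα, X.down_closed _ hbig' _ (Finset.subset_insert _ _)⟩
    · refine (X.mem_linkVerts).mpr ⟨?_, hbig'⟩
      simp only [Finset.mem_insert, not_or]
      exact ⟨huv, huα⟩
  exact ⟨dir x y, dir y x⟩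

lemma sum_to_univ {ι : Type*} [Fintype ι] [DecidableEq ι] (s : Finset ι) (h : ι → ℝ) :
    ∑ x ∈ s, h x = ∑ x ∈ Finset.univ, if x ∈ s then h x else 0 := by
  rw [Finset.sum_ite_mem, Finset.univ_inter]

lemma link_pair_swap (α : Finset V) (F : V → V → ℝ) :
    ∑ x ∈ X.linkVerts α, ∑ y ∈ X.linkVerts (insert x α), F x y
      = ∑ y ∈ X.linkVerts α, ∑ x ∈ X.linkVerts (insert y α), F x y := by
  have rect : ∀ G : V → V → ℝ,
      (∑ x ∈ X.linkVerts α, ∑ y ∈ X.linkVerts (insert x α), G x y)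
        = ∑ x ∈ Finset.univ, ∑ y ∈ Finset.univ,
            if x ∈ X.linkVerts α ∧ y ∈ X.linkVerts (insert x α) then G x y else 0 := by
    intro G
    rw [sum_to_univ (X.linkVerts α)]
    apply Finset.sum_congr rfl
    intro x _
    by_cases hx : x ∈ X.linkVerts α
    · simp only [hx, if_true, true_and]
      rw [sum_to_univ (X.linkVerts (insert x α))]
    · simp [hx]
  rw [rect F, rect (fun y x => F x y)]
  rw [Finset.sum_comm]
  apply Finset.sum_congr rfl
  intro y _
  apply Finset.sum_congr rfl
  intro x _
  exact if_congr (X.link_pair_mem_iff α x y) rfl rfl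

lemma kernel_eval (α : Finset V) (hα : α ∈ X.faces) (hcard : α.card + 1 ≤ d)
    (x : V) (hx : x ∈ X.linkVerts α) (y : V) (hy : y ∈ X.linkVerts (insert x α)) :
    X.linkPi α {x} * X.linkPi (insert x α) {y}
      = X.W (α.card + 2) (insert y (insert x α))
          / ((((α.card : ℝ) + 1) * ((α.card : ℝ) + 2)) * X.W α.card α) := by
  have hxα := X.linkVerts_not_mem α x hx
  have hyins := X.linkVerts_not_mem _ y hy
  have hWαx := X.W_pos (α.card + 1) (by omega) (insert x α) (X.linkVerts_mem_faces α x hx)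
    (X.card_insert_lv α x hx)
  rw [X.linkPi_single α x hxα, X.linkPi_single (insert x α) y hyins, X.card_insert_lv α x hx]
  have h5 : (((α.card : ℝ) + 1) + 1) = (α.card : ℝ) + 2 := by ring
  push_cast
  rw [h5]
  have h4 : X.W (α.card + 1) (insert x α) ≠ 0 := ne_of_gt hWαx
  have hWα := X.W_pos α.card (by omega) α hα rfl
  have h3 : X.W α.card α ≠ 0 := ne_of_gt hWα
  have h1 : ((α.card : ℝ) + 1) ≠ 0 := by positivity
  have h2 : ((α.card : ℝ) + 2) ≠ 0 := by positivity
  field_simp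

lemma kernel_row_sum (α : Finset V) (hα : α ∈ X.faces) (hcard : α.card + 1 ≤ d)
    (y : V) (hy : y ∈ X.linkVerts α) :
    ∑ x ∈ X.linkVerts (insert y α),
        X.W (α.card + 2) (insert y (insert x α))
          / ((((α.card : ℝ) + 1) * ((α.card : ℝ) + 2)) * X.W α.card α)
      = X.linkPi α {y} := by
  have hyα := X.linkVerts_not_mem α y hy
  have hyf := X.linkVerts_mem_faces α y hy
  have hyc := X.card_insert_lv α y hy
  have e : ∀ x ∈ X.linkVerts (insert y α),
      X.W (α.card + 2) (insert y (insert x α))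
        = X.W ((insert y α).card + 1) (insert x (insert y α)) := by
    intro x hx
    rw [hyc, Finset.insert_comm]
  rw [Finset.sum_congr rfl (fun x hx => by rw [e x hx]), ← Finset.sum_div,
    X.W_rec_link (insert y α) (by omega)]
  rw [hyc, X.linkPi_single α y hyα]
  have hWα := X.W_pos α.card (by omega) α hα rfl
  have h1 : ((α.card : ℝ) + 1) ≠ 0 := by positivity
  have h2 : ((α.card : ℝ) + 2) ≠ 0 := by positivity
  have h3 : X.W α.card α ≠ 0 := ne_of_gt hWα
  push_cast
  field_simp
  ring

lemma linkInner_walk (α : Finset V) (hα : α ∈ X.faces) (hcard : α.card + 1 ≤ d)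
    (g h : V → ℝ) :
    X.linkInner α g (X.linkWalk α h)
      = ∑ x ∈ X.linkVerts α, ∑ y ∈ X.linkVerts (insert x α),
          (X.W (α.card + 2) (insert y (insert x α))
            / ((((α.card : ℝ) + 1) * ((α.card : ℝ) + 2)) * X.W α.card α)) * g x * h y := by
  unfold linkInner
  apply Finset.sum_congr rfl
  intro x hx
  rw [X.linkWalk_eq α hα hcard h x hx, Finset.mul_sum]
  apply Finset.sum_congr rfl
  intro y hy
  rw [← X.kernel_eval α hα hcard x hx y hy]
  ring

/-! ### Link inner product basics -/

lemma linkInner_comm (α : Finset V) (g h : V → ℝ) :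
    X.linkInner α g h = X.linkInner α h g :=
  Finset.sum_congr rfl fun x _ => by ring

lemma linkInner_self_nonneg (α : Finset V) (g : V → ℝ) : 0 ≤ X.linkInner α g g :=
  Finset.sum_nonneg fun x _ => by
    have e : X.linkPi α {x} * g x * g x = X.linkPi α {x} * (g x) ^ 2 := by ring
    rw [e]
    exact mul_nonneg (X.linkPi_nonneg α {x}) (sq_nonneg _)

lemma linkInner_self_pos (α : Finset V) (g : V → ℝ) (h : X.linkInner α g g ≠ 0) :
    0 < X.linkInner α g g := lt_of_le_of_ne (X.linkInner_self_nonneg α g) (Ne.symm h)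

lemma kernel_nonneg (α : Finset V) (x y : V) :
    0 ≤ X.W (α.card + 2) (insert y (insert x α))
      / ((((α.card : ℝ) + 1) * ((α.card : ℝ) + 2)) * X.W α.card α) :=
  div_nonneg (X.W_nonneg _ _) (mul_nonneg (by positivity) (X.W_nonneg _ _))

lemma kernel_col_sum (α : Finset V) (hα : α ∈ X.faces) (hcard : α.card + 1 ≤ d)
    (x : V) (hx : x ∈ X.linkVerts α) :
    ∑ y ∈ X.linkVerts (insert x α),
        X.W (α.card + 2) (insert y (insert x α))
          / ((((α.card : ℝ) + 1) * ((α.card : ℝ) + 2)) * X.W α.card α)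
      = X.linkPi α {x} := by
  have e : ∀ y ∈ X.linkVerts (insert x α),
      X.W (α.card + 2) (insert y (insert x α))
          / ((((α.card : ℝ) + 1) * ((α.card : ℝ) + 2)) * X.W α.card α)
        = X.linkPi α {x} * X.linkPi (insert x α) {y} :=
    fun y hy => (X.kernel_eval α hα hcard x hx y hy).symm
  rw [Finset.sum_congr rfl e, ← Finset.mul_sum,
    X.linkPi_single_sum (insert x α) (X.linkVerts_mem_faces α x hx)
      (by rw [X.card_insert_lv α x hx]; omega), mul_one]

lemma walk_mean (α : Finset V) (hα : α ∈ X.faces) (hcard : α.card + 1 ≤ d) (u : V → ℝ) :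
    ∑ x ∈ X.linkVerts α, X.linkPi α {x} * X.linkWalk α u x
      = ∑ y ∈ X.linkVerts α, X.linkPi α {y} * u y := by
  have h := X.linkInner_walk α hα hcard (fun _ => 1) u
  unfold linkInner at h
  simp only [mul_one] at h
  have h' : ∑ x ∈ X.linkVerts α, X.linkPi α {x} * X.linkWalk α u x
      = ∑ x ∈ X.linkVerts α, ∑ y ∈ X.linkVerts (insert x α),
          X.W (α.card + 2) (insert y (insert x α))
            / ((((α.card : ℝ) + 1) * ((α.card : ℝ) + 2)) * X.W α.card α) * u y := by
    rw [h]
  rw [h', X.link_pair_swap α]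
  apply Finset.sum_congr rfl
  intro y hy
  rw [← Finset.sum_mul, X.kernel_row_sum α hα hcard y hy]

lemma kernel_half_sum (α : Finset V) (hα : α ∈ X.faces) (hcard : α.card + 1 ≤ d)
    (g : V → ℝ) :
    ∑ x ∈ X.linkVerts α, ∑ y ∈ X.linkVerts (insert x α),
        X.W (α.card + 2) (insert y (insert x α))
          / ((((α.card : ℝ) + 1) * ((α.card : ℝ) + 2)) * X.W α.card α)
            * ((g x ^ 2 + g y ^ 2) / 2)
      = X.linkInner α g g := by
  have hx2 : ∑ x ∈ X.linkVerts α, ∑ y ∈ X.linkVerts (insert x α),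
      X.W (α.card + 2) (insert y (insert x α))
        / ((((α.card : ℝ) + 1) * ((α.card : ℝ) + 2)) * X.W α.card α) * g x ^ 2
      = ∑ x ∈ X.linkVerts α, X.linkPi α {x} * g x ^ 2 := by
    apply Finset.sum_congr rfl
    intro x hx
    rw [← Finset.sum_mul, X.kernel_col_sum α hα hcard x hx]
  have hy2 : ∑ x ∈ X.linkVerts α, ∑ y ∈ X.linkVerts (insert x α),
      X.W (α.card + 2) (insert y (insert x α))
        / ((((α.card : ℝ) + 1) * ((α.card : ℝ) + 2)) * X.W α.card α) * g y ^ 2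
      = ∑ y ∈ X.linkVerts α, X.linkPi α {y} * g y ^ 2 := by
    rw [X.link_pair_swap α]
    apply Finset.sum_congr rfl
    intro y hy
    rw [← Finset.sum_mul, X.kernel_row_sum α hα hcard y hy]
  have e : ∀ x ∈ X.linkVerts α, ∑ y ∈ X.linkVerts (insert x α),
      X.W (α.card + 2) (insert y (insert x α))
        / ((((α.card : ℝ) + 1) * ((α.card : ℝ) + 2)) * X.W α.card α)
          * ((g x ^ 2 + g y ^ 2) / 2)
      = (∑ y ∈ X.linkVerts (insert x α),
          X.W (α.card + 2) (insert y (insert x α))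
            / ((((α.card : ℝ) + 1) * ((α.card : ℝ) + 2)) * X.W α.card α) * g x ^ 2) / 2
        + (∑ y ∈ X.linkVerts (insert x α),
          X.W (α.card + 2) (insert y (insert x α))
            / ((((α.card : ℝ) + 1) * ((α.card : ℝ) + 2)) * X.W α.card α) * g y ^ 2) / 2 := by
    intro x _
    rw [Finset.sum_div, Finset.sum_div, ← Finset.sum_add_distrib]
    exact Finset.sum_congr rfl fun y _ => by ring
  rw [Finset.sum_congr rfl e, Finset.sum_add_distrib, ← Finset.sum_div, ← Finset.sum_div,
    hx2, hy2]
  unfold linkInner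
  have final : ∀ x ∈ X.linkVerts α,
      X.linkPi α {x} * g x ^ 2 = X.linkPi α {x} * g x * g x :=
    fun x _ => by ring
  rw [Finset.sum_congr rfl final]
  ring

lemma linkInner_walk_le (α : Finset V) (hα : α ∈ X.faces) (hcard : α.card + 1 ≤ d)
    (g : V → ℝ) :
    X.linkInner α g (X.linkWalk α g) ≤ X.linkInner α g g := by
  rw [X.linkInner_walk α hα hcard g g, ← X.kernel_half_sum α hα hcard g]
  apply Finset.sum_le_sum
  intro x _
  apply Finset.sum_le_sum
  intro y _
  have hK := X.kernel_nonneg α x y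
  nlinarith [sq_nonneg (g x - g y)]

lemma linkInner_walk_ge (α : Finset V) (hα : α ∈ X.faces) (hcard : α.card + 1 ≤ d)
    (g : V → ℝ) :
    -X.linkInner α g g ≤ X.linkInner α g (X.linkWalk α g) := by
  rw [X.linkInner_walk α hα hcard g g, ← X.kernel_half_sum α hα hcard g]
  rw [← Finset.sum_neg_distrib]
  apply Finset.sum_le_sum
  intro x _
  rw [← Finset.sum_neg_distrib]
  apply Finset.sum_le_sum
  intro y _
  have hK := X.kernel_nonneg α x y
  nlinarith [sq_nonneg (g x + g y)]

/-! ### linkLam2 and gammaC basics -/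

lemma linkLam2_bdd (α : Finset V) (hα : α ∈ X.faces) (hcard : α.card + 1 ≤ d) :
    BddAbove { r : ℝ | ∃ f : V → ℝ,
      X.linkInner α f (fun _ => 1) = 0 ∧ X.linkInner α f f ≠ 0 ∧
      r = X.linkInner α f (X.linkWalk α f) / X.linkInner α f f } := by
  refine ⟨1, ?_⟩
  rintro r ⟨f, h1, h2, rfl⟩
  rw [div_le_one (X.linkInner_self_pos α f h2)]
  exact X.linkInner_walk_le α hα hcard f

lemma gammaC_bdd (m : ℕ) :
    BddAbove { r : ℝ | ∃ α ∈ X.faces, α.card = m ∧ r = X.linkLam2 α } := by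
  apply Set.Finite.bddAbove
  apply Set.Finite.subset (Set.finite_range X.linkLam2)
  rintro r ⟨α, hα, hc, rfl⟩
  exact ⟨α, rfl⟩

lemma linkLam2_le_gammaC (α : Finset V) (hα : α ∈ X.faces) :
    X.linkLam2 α ≤ X.gammaC α.card :=
  le_csSup (X.gammaC_bdd α.card) ⟨α, hα, rfl, rfl⟩

/-! ### Per-link Rayleigh bound -/

lemma link_bound (α : Finset V) (hα : α ∈ X.faces) (hcard : α.card + 1 ≤ d)
    (b : ℝ) (hb : X.linkLam2 α ≤ b) (g : V → ℝ) :
    X.linkInner α g (X.linkWalk α g)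
      ≤ b * (X.linkInner α g g - (∑ x ∈ X.linkVerts α, X.linkPi α {x} * g x) ^ 2)
        + (∑ x ∈ X.linkVerts α, X.linkPi α {x} * g x) ^ 2 := by
  set e : ℝ := ∑ x ∈ X.linkVerts α, X.linkPi α {x} * g x with he
  set g' : V → ℝ := fun v => g v - e with hg'
  have hmass := X.linkPi_single_sum α hα (by omega)
  have hg'sum : ∑ x ∈ X.linkVerts α, X.linkPi α {x} * g' x = 0 := by
    have h0 : ∀ x ∈ X.linkVerts α, X.linkPi α {x} * g' x
        = X.linkPi α {x} * g x - X.linkPi α {x} * e := fun x _ => by rw [hg']; ring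
    rw [Finset.sum_congr rfl h0, Finset.sum_sub_distrib, ← Finset.sum_mul, hmass, ← he]
    ring
  have h1 : X.linkInner α g' (fun _ => 1) = 0 := by
    unfold linkInner
    calc ∑ x ∈ X.linkVerts α, X.linkPi α {x} * g' x * 1
        = ∑ x ∈ X.linkVerts α, X.linkPi α {x} * g' x :=
          Finset.sum_congr rfl fun x _ => by ring
      _ = 0 := hg'sum
  have hwalk : ∀ x ∈ X.linkVerts α, X.linkWalk α g x = X.linkWalk α g' x + e := by
    intro x hx
    rw [X.linkWalk_eq α hα hcard g x hx, X.linkWalk_eq α hα hcard g' x hx]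
    have hmass' := X.linkPi_single_sum (insert x α) (X.linkVerts_mem_faces α x hx)
      (by rw [X.card_insert_lv α x hx]; omega)
    have h0 : ∀ y ∈ X.linkVerts (insert x α), X.linkPi (insert x α) {y} * g y
        = X.linkPi (insert x α) {y} * g' y + X.linkPi (insert x α) {y} * e := fun y _ => by
      rw [hg']; ring
    rw [Finset.sum_congr rfl h0, Finset.sum_add_distrib, ← Finset.sum_mul, hmass', one_mul]
  have hMg'0 : ∑ x ∈ X.linkVerts α, X.linkPi α {x} * X.linkWalk α g' x = 0 := by
    rw [X.walk_mean α hα hcard g']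
    exact hg'sum
  have hsplit_self : X.linkInner α g g = X.linkInner α g' g' + e ^ 2 := by
    unfold linkInner
    have h0 : ∀ x ∈ X.linkVerts α, X.linkPi α {x} * g x * g x
        = X.linkPi α {x} * g' x * g' x + (X.linkPi α {x} * g' x) * (2 * e)
          + X.linkPi α {x} * e ^ 2 := by
      intro x _
      have hgx : g x = g' x + e := by rw [hg']; ring
      rw [hgx]; ring
    rw [Finset.sum_congr rfl h0, Finset.sum_add_distrib, Finset.sum_add_distrib,
      ← Finset.sum_mul, hg'sum, ← Finset.sum_mul, hmass]
    ring
  have hsplit : X.linkInner α g (X.linkWalk α g)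
      = X.linkInner α g' (X.linkWalk α g') + e ^ 2 := by
    unfold linkInner
    have h0 : ∀ x ∈ X.linkVerts α, X.linkPi α {x} * g x * X.linkWalk α g x
        = X.linkPi α {x} * g' x * X.linkWalk α g' x
          + (X.linkPi α {x} * g' x) * e + (X.linkPi α {x} * X.linkWalk α g' x) * e
          + X.linkPi α {x} * e ^ 2 := by
      intro x hx
      have hgx : g x = g' x + e := by rw [hg']; ring
      rw [hwalk x hx, hgx]; ring
    rw [Finset.sum_congr rfl h0, Finset.sum_add_distrib, Finset.sum_add_distrib,
      Finset.sum_add_distrib, ← Finset.sum_mul, hg'sum, ← Finset.sum_mul, hMg'0,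
      ← Finset.sum_mul, hmass]
    ring
  by_cases hz : X.linkInner α g' g' = 0
  · have hup := X.linkInner_walk_le α hα hcard g'
    have hlo := X.linkInner_walk_ge α hα hcard g'
    rw [hz] at hup hlo
    have h0 : X.linkInner α g' (X.linkWalk α g') = 0 := le_antisymm hup (by linarith)
    rw [hsplit, h0, hsplit_self, hz]
    have h9 : b * (0 + e ^ 2 - e ^ 2) + e ^ 2 = 0 + e ^ 2 := by ring
    rw [h9]
  · have hmem : X.linkInner α g' (X.linkWalk α g') / X.linkInner α g' g' ≤ X.linkLam2 α :=
      le_csSup (X.linkLam2_bdd α hα hcard) ⟨g', h1, hz, rfl⟩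
    have hpos := X.linkInner_self_pos α g' hz
    rw [div_le_iff₀ hpos] at hmem
    have hle : X.linkInner α g' (X.linkWalk α g') ≤ b * X.linkInner α g' g' :=
      hmem.trans (mul_le_mul_of_nonneg_right hb hpos.le)
    rw [hsplit, hsplit_self]
    have h9 : X.linkInner α g' g' + e ^ 2 - e ^ 2 = X.linkInner α g' g' := by ring
    rw [h9]
    linarith

/-! ### Localization of the up-down walk -/

lemma sum_pairs_apply (m : ℕ) (G : Finset V → V → ℝ) (H : Finset V → V → ℝ)
    (hmatch : ∀ B ∈ X.faces.filter (fun B => B.card = m + 1), ∀ x ∈ B,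
      H B x = G (B.erase x) x) :
    ∑ B ∈ X.faces.filter (fun B => B.card = m + 1), ∑ x ∈ B, H B x
      = ∑ σ ∈ X.faces.filter (fun σ => σ.card = m), ∑ x ∈ X.linkVerts σ, G σ x := by
  rw [← X.sum_pairs m G]
  apply Finset.sum_congr rfl
  intro B hB
  exact Finset.sum_congr rfl fun x hx => hmatch B hB x hx

lemma inn_localize_self (m : ℕ) (hm : m ≤ d) (f : Finset V → ℝ) :
    X.inn (m + 1) f f
      = ∑ α ∈ X.faces.filter (fun α => α.card = m),
          X.W m α * X.linkInner α (fun x => f (insert x α)) (fun x => f (insert x α)) := by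
  have key := X.sum_pairs_apply m
    (fun σ x => X.W (m + 1) (insert x σ) * (f (insert x σ) * f (insert x σ)) / ((m : ℝ) + 1))
    (fun B x => X.W (m + 1) B * (f B * f B) / ((m : ℝ) + 1))
    (by
      intro B hB x hx
      simp only [Finset.insert_erase hx])
  unfold inn
  have e1 : ∀ B ∈ X.faces.filter (fun B => B.card = m + 1),
      X.W (m + 1) B * f B * f B
        = ∑ x ∈ B, X.W (m + 1) B * (f B * f B) / ((m : ℝ) + 1) := by
    intro B hB
    obtain ⟨hBf, hBc⟩ := Finset.mem_filter.mp hB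
    rw [Finset.sum_const, hBc, nsmul_eq_mul]
    have h4 : ((m : ℝ) + 1) ≠ 0 := by positivity
    push_cast
    field_simp
  rw [Finset.sum_congr rfl e1, key]
  apply Finset.sum_congr rfl
  intro σ hσ
  obtain ⟨hσf, hσc⟩ := Finset.mem_filter.mp hσ
  unfold linkInner
  rw [Finset.mul_sum]
  apply Finset.sum_congr rfl
  intro x hx
  rw [X.linkPi_single σ x (X.linkVerts_not_mem σ x hx), hσc]
  have hWσ := X.W_pos m (by omega) σ hσf hσc
  have h3 : X.W m σ ≠ 0 := ne_of_gt hWσ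
  have h4 : ((m : ℝ) + 1) ≠ 0 := by positivity
  field_simp

lemma downOp_eq_mean (α : Finset V) (f : Finset V → ℝ) :
    X.downOp f α = ∑ x ∈ X.linkVerts α, X.linkPi α {x} * f (insert x α) := by
  unfold downOp
  rw [X.sum_covers α
    (fun β => X.W (α.card + 1) β * f β / (((α.card : ℝ) + 1) * X.W α.card α))]
  apply Finset.sum_congr rfl
  intro x hx
  rw [X.linkPi_single α x (X.linkVerts_not_mem α x hx)]
  ring

lemma inn_localize_walk (m : ℕ) (hm : m + 1 ≤ d) (f : Finset V → ℝ) :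
    X.inn (m + 1) f (X.upDown f)
      = (1 / ((m : ℝ) + 2)) * X.inn (m + 1) f f
        + (((m : ℝ) + 1) / ((m : ℝ) + 2)) *
            ∑ α ∈ X.faces.filter (fun α => α.card = m),
              X.W m α * X.linkInner α (fun x => f (insert x α))
                (X.linkWalk α (fun x => f (insert x α))) := by
  have hiu : X.inn (m + 1) f (X.upDown f)
      = X.inn (m + 2) (upOp f) (upOp f) := X.inn_upDown (m + 1) hm f
  -- expand the square
  have expand : ∀ B ∈ X.faces.filter (fun B => B.card = m + 2),
      X.W (m + 2) B * upOp f B * upOp f B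
        = (∑ x ∈ B, X.W (m + 2) B * (f (B.erase x) * f (B.erase x)) / ((m : ℝ) + 2) ^ 2)
          + ∑ x ∈ B, ∑ y ∈ B.erase x,
              (X.W (m + 2) B / ((m : ℝ) + 2) ^ 2) * f (B.erase x) * f (B.erase y) := by
    intro B hB
    obtain ⟨hBf, hBc⟩ := Finset.mem_filter.mp hB
    have e1 : upOp f B = (1 / ((m : ℝ) + 2)) * ∑ x ∈ B, f (B.erase x) := by
      unfold upOp
      rw [hBc]
      push_cast
      ring
    have e2 : (∑ x ∈ B, f (B.erase x)) * (∑ y ∈ B, f (B.erase y))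
        = ∑ x ∈ B, ∑ y ∈ B, f (B.erase x) * f (B.erase y) := Finset.sum_mul_sum _ _ _ _
    have e3 : ∀ x ∈ B, ∑ y ∈ B, f (B.erase x) * f (B.erase y)
        = f (B.erase x) * f (B.erase x)
          + ∑ y ∈ B.erase x, f (B.erase x) * f (B.erase y) := by
      intro x hx
      exact (Finset.add_sum_erase B (fun y => f (B.erase x) * f (B.erase y)) hx).symm
    calc X.W (m + 2) B * upOp f B * upOp f B
        = (X.W (m + 2) B / ((m : ℝ) + 2) ^ 2)
            * ((∑ x ∈ B, f (B.erase x)) * (∑ y ∈ B, f (B.erase y))) := by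
          rw [e1]; field_simp
      _ = (X.W (m + 2) B / ((m : ℝ) + 2) ^ 2)
            * ∑ x ∈ B, (f (B.erase x) * f (B.erase x)
                + ∑ y ∈ B.erase x, f (B.erase x) * f (B.erase y)) := by
          rw [e2, ← Finset.sum_congr rfl e3]
      _ = _ := by
          rw [Finset.mul_sum]
          have e4 : ∀ x ∈ B, (X.W (m + 2) B / ((m : ℝ) + 2) ^ 2)
              * (f (B.erase x) * f (B.erase x)
                + ∑ y ∈ B.erase x, f (B.erase x) * f (B.erase y))
              = X.W (m + 2) B * (f (B.erase x) * f (B.erase x)) / ((m : ℝ) + 2) ^ 2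
                + ∑ y ∈ B.erase x,
                    (X.W (m + 2) B / ((m : ℝ) + 2) ^ 2) * f (B.erase x) * f (B.erase y) := by
            intro x _
            rw [mul_add, Finset.mul_sum]
            congr 1
            · ring
            · exact Finset.sum_congr rfl fun y _ => by ring
          rw [Finset.sum_congr rfl e4, Finset.sum_add_distrib]
  -- diagonal part
  have diag : ∑ B ∈ X.faces.filter (fun B => B.card = m + 2),
      ∑ x ∈ B, X.W (m + 2) B * (f (B.erase x) * f (B.erase x)) / ((m : ℝ) + 2) ^ 2
      = (1 / ((m : ℝ) + 2)) * X.inn (m + 1) f f := by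
    have key := X.sum_pairs_apply (m + 1)
      (fun σ x => X.W (m + 2) (insert x σ) * (f σ * f σ) / ((m : ℝ) + 2) ^ 2)
      (fun B x => X.W (m + 2) B * (f (B.erase x) * f (B.erase x)) / ((m : ℝ) + 2) ^ 2)
      (by
        intro B hB x hx
        simp only [Finset.insert_erase hx])
    rw [key]
    unfold inn
    rw [Finset.mul_sum]
    apply Finset.sum_congr rfl
    intro σ hσ
    obtain ⟨hσf, hσc⟩ := Finset.mem_filter.mp hσ
    have h5 := X.W_rec_link σ (by omega)
    calc ∑ x ∈ X.linkVerts σ, X.W (m + 2) (insert x σ) * (f σ * f σ) / ((m : ℝ) + 2) ^ 2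
        = (f σ * f σ / ((m : ℝ) + 2) ^ 2)
            * ∑ x ∈ X.linkVerts σ, X.W (σ.card + 1) (insert x σ) := by
          rw [Finset.mul_sum]
          apply Finset.sum_congr rfl
          intro x _
          rw [hσc]
          ring
      _ = (f σ * f σ / ((m : ℝ) + 2) ^ 2) * (((σ.card : ℝ) + 1) * X.W σ.card σ) := by
          rw [h5]
      _ = 1 / ((m : ℝ) + 2) * (X.W (m + 1) σ * f σ * f σ) := by
          rw [hσc]
          have h4 : ((m : ℝ) + 2) ≠ 0 := by positivity
          push_cast
          field_simp
          ring
  -- off-diagonal part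
  have offd : ∑ B ∈ X.faces.filter (fun B => B.card = m + 2),
      ∑ x ∈ B, ∑ y ∈ B.erase x,
        (X.W (m + 2) B / ((m : ℝ) + 2) ^ 2) * f (B.erase x) * f (B.erase y)
      = (((m : ℝ) + 1) / ((m : ℝ) + 2)) *
          ∑ α ∈ X.faces.filter (fun α => α.card = m),
            X.W m α * X.linkInner α (fun x => f (insert x α))
              (X.linkWalk α (fun x => f (insert x α))) := by
    have key1 := X.sum_pairs_apply (m + 1)
      (fun σ x => ∑ y ∈ σ,
        (X.W (m + 2) (insert x σ) / ((m : ℝ) + 2) ^ 2) * f σ * f (insert x (σ.erase y)))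
      (fun B x => ∑ y ∈ B.erase x,
        (X.W (m + 2) B / ((m : ℝ) + 2) ^ 2) * f (B.erase x) * f (B.erase y))
      (by
        intro B hB x hx
        simp only [Finset.insert_erase hx]
        apply Finset.sum_congr rfl
        intro y hy
        have hyx : y ≠ x := Finset.ne_of_mem_erase hy
        have e : insert x ((B.erase x).erase y) = B.erase y := by
          rw [Finset.erase_right_comm]
          exact Finset.insert_erase (Finset.mem_erase.mpr ⟨Ne.symm hyx, hx⟩)
        rw [e])
    rw [key1]
    have swap : ∀ σ ∈ X.faces.filter (fun σ => σ.card = m + 1),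
        ∑ x ∈ X.linkVerts σ, ∑ y ∈ σ,
          (X.W (m + 2) (insert x σ) / ((m : ℝ) + 2) ^ 2) * f σ * f (insert x (σ.erase y))
        = ∑ y ∈ σ, ∑ x ∈ X.linkVerts σ,
          (X.W (m + 2) (insert x σ) / ((m : ℝ) + 2) ^ 2) * f σ * f (insert x (σ.erase y)) :=
      fun σ _ => Finset.sum_comm
    rw [Finset.sum_congr rfl swap]
    have key2 := X.sum_pairs_apply m
      (fun α y => ∑ x ∈ X.linkVerts (insert y α),
        (X.W (m + 2) (insert x (insert y α)) / ((m : ℝ) + 2) ^ 2) * f (insert y α)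
          * f (insert x α))
      (fun σ y => ∑ x ∈ X.linkVerts σ,
        (X.W (m + 2) (insert x σ) / ((m : ℝ) + 2) ^ 2) * f σ * f (insert x (σ.erase y)))
      (by
        intro σ hσ y hy
        simp only [Finset.insert_erase hy])
    rw [key2, Finset.mul_sum]
    apply Finset.sum_congr rfl
    intro α hα
    obtain ⟨hαf, hαc⟩ := Finset.mem_filter.mp hα
    rw [X.linkInner_walk α hαf (by omega)]
    rw [Finset.mul_sum, Finset.mul_sum]
    apply Finset.sum_congr rfl
    intro x hx
    rw [Finset.mul_sum, Finset.mul_sum]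
    apply Finset.sum_congr rfl
    intro y hy
    rw [hαc]
    have hWα := X.W_pos m (by omega) α hαf hαc
    have h3 : X.W m α ≠ 0 := ne_of_gt hWα
    have h4 : ((m : ℝ) + 1) ≠ 0 := by positivity
    have h5 : ((m : ℝ) + 2) ≠ 0 := by positivity
    field_simp
  rw [hiu]
  unfold inn
  rw [Finset.sum_congr rfl expand, Finset.sum_add_distrib, diag, offd]
  unfold inn
  rfl

/-! ### The recursion step -/

lemma upDown_step (m : ℕ) (hm : m + 1 ≤ d) (γ : ℝ) (hγle : X.gammaC m ≤ γ)
    (hγ0 : 0 ≤ γ) (hγ1 : γ ≤ 1) (R : ℝ) (hR0 : 0 ≤ R)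
    (hRb : X.lam2 (m + 1) X.downUp ≤ R) :
    X.lam2 (m + 1) X.upDown
      ≤ 1 / ((m : ℝ) + 2) + (((m : ℝ) + 1) / ((m : ℝ) + 2)) * (γ + (1 - γ) * R) := by
  have hBnn : (0:ℝ) ≤ 1 / ((m : ℝ) + 2)
      + (((m : ℝ) + 1) / ((m : ℝ) + 2)) * (γ + (1 - γ) * R) := by
    have h0 : (0:ℝ) ≤ γ + (1 - γ) * R := by nlinarith
    have h1 : (0:ℝ) ≤ ((m : ℝ) + 1) / ((m : ℝ) + 2) := by positivity
    have h2 : (0:ℝ) ≤ 1 / ((m : ℝ) + 2) := by positivity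
    nlinarith
  apply X.lam2_le _ _ _ hBnn
  intro f h1 h2
  have hloc := X.inn_localize_walk m hm f
  have hself := X.inn_localize_self m (by omega) f
  have hfpos := X.inn_self_pos (m + 1) f h2
  have hDUnum : X.inn (m + 1) f (X.downUp f) = X.inn m (X.downOp f) (X.downOp f) :=
    X.inn_downUp m (by omega) f
  have hsq : X.inn m (X.downOp f) (X.downOp f)
      = ∑ α ∈ X.faces.filter (fun α => α.card = m), X.W m α * (X.downOp f α) ^ 2 := by
    unfold inn
    exact Finset.sum_congr rfl fun α _ => by ring
  have hA : ∑ α ∈ X.faces.filter (fun α => α.card = m),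
      X.W m α * X.linkInner α (fun x => f (insert x α))
        (X.linkWalk α (fun x => f (insert x α)))
      ≤ γ * X.inn (m + 1) f f + (1 - γ) * X.inn (m + 1) f (X.downUp f) := by
    have step : ∀ α ∈ X.faces.filter (fun α => α.card = m),
        X.W m α * X.linkInner α (fun x => f (insert x α))
          (X.linkWalk α (fun x => f (insert x α)))
        ≤ X.W m α * (γ * (X.linkInner α (fun x => f (insert x α)) (fun x => f (insert x α))
            - (X.downOp f α) ^ 2) + (X.downOp f α) ^ 2) := by
      intro α hα
      obtain ⟨hαf, hαc⟩ := Finset.mem_filter.mp hα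
      apply mul_le_mul_of_nonneg_left _ (X.W_nonneg m α)
      have hb : X.linkLam2 α ≤ γ := by
        have hgc := X.linkLam2_le_gammaC α hαf
        rw [hαc] at hgc
        exact hgc.trans hγle
      have hlb := X.link_bound α hαf (by omega) γ hb (fun x => f (insert x α))
      rw [X.downOp_eq_mean α f]
      exact hlb
    calc ∑ α ∈ X.faces.filter (fun α => α.card = m),
        X.W m α * X.linkInner α (fun x => f (insert x α))
          (X.linkWalk α (fun x => f (insert x α)))
        ≤ ∑ α ∈ X.faces.filter (fun α => α.card = m),
            X.W m α * (γ * (X.linkInner α (fun x => f (insert x α)) (fun x => f (insert x α))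
              - (X.downOp f α) ^ 2) + (X.downOp f α) ^ 2) := Finset.sum_le_sum step
      _ = γ * ∑ α ∈ X.faces.filter (fun α => α.card = m),
            X.W m α * X.linkInner α (fun x => f (insert x α)) (fun x => f (insert x α))
          + (1 - γ) * ∑ α ∈ X.faces.filter (fun α => α.card = m),
            X.W m α * (X.downOp f α) ^ 2 := by
          rw [Finset.mul_sum, Finset.mul_sum, ← Finset.sum_add_distrib]
          exact Finset.sum_congr rfl fun α _ => by ring
      _ = γ * X.inn (m + 1) f f + (1 - γ) * X.inn (m + 1) f (X.downUp f) := by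
          rw [← hself, ← hsq, ← hDUnum]
  have hDUb : X.inn (m + 1) f (X.downUp f) ≤ R * X.inn (m + 1) f f := by
    have hq := X.rayleigh_le_lam2 (m + 1) X.downUp (X.downUp_bdd m (by omega)) f h1 h2
    rw [div_le_iff₀ hfpos] at hq
    calc X.inn (m + 1) f (X.downUp f) ≤ X.lam2 (m + 1) X.downUp * X.inn (m + 1) f f := hq
      _ ≤ R * X.inn (m + 1) f f := mul_le_mul_of_nonneg_right hRb hfpos.le
  have hDUnn : 0 ≤ X.inn (m + 1) f (X.downUp f) := by
    rw [hDUnum]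
    exact X.inn_self_nonneg _ _
  rw [hloc]
  have hco : (0:ℝ) ≤ ((m : ℝ) + 1) / ((m : ℝ) + 2) := by positivity
  calc (1 / ((m : ℝ) + 2)) * X.inn (m + 1) f f
        + (((m : ℝ) + 1) / ((m : ℝ) + 2)) *
          ∑ α ∈ X.faces.filter (fun α => α.card = m),
            X.W m α * X.linkInner α (fun x => f (insert x α))
              (X.linkWalk α (fun x => f (insert x α)))
      ≤ (1 / ((m : ℝ) + 2)) * X.inn (m + 1) f f
        + (((m : ℝ) + 1) / ((m : ℝ) + 2)) *
          (γ * X.inn (m + 1) f f + (1 - γ) * X.inn (m + 1) f (X.downUp f)) := by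
        exact add_le_add_right (mul_le_mul_of_nonneg_left hA hco) _
    _ ≤ (1 / ((m : ℝ) + 2)) * X.inn (m + 1) f f
        + (((m : ℝ) + 1) / ((m : ℝ) + 2)) *
          (γ * X.inn (m + 1) f f + (1 - γ) * (R * X.inn (m + 1) f f)) := by
        apply add_le_add_right
        apply mul_le_mul_of_nonneg_left _ hco
        apply add_le_add_right
        exact mul_le_mul_of_nonneg_left hDUb (by linarith)
    _ = (1 / ((m : ℝ) + 2) + (((m : ℝ) + 1) / ((m : ℝ) + 2)) * (γ + (1 - γ) * R))
          * X.inn (m + 1) f f := by ring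

/-! ### Triple sums and Oppenheim's trickling down -/

lemma link_chain_iff (α : Finset V) (x y z : V) :
    (x ∈ X.linkVerts α ∧ y ∈ X.linkVerts (insert x α)
        ∧ z ∈ X.linkVerts (insert y (insert x α)))
      ↔ (x ∉ α ∧ y ∉ α ∧ z ∉ α ∧ x ≠ y ∧ y ≠ z ∧ x ≠ z
          ∧ insert z (insert y (insert x α)) ∈ X.faces) := by
  simp only [mem_linkVerts, Finset.mem_insert, not_or]
  constructor
  · rintro ⟨⟨hxα, hxf⟩, ⟨⟨hyx, hyα⟩, hyf⟩, ⟨hzy, hzx, hzα⟩, hzf⟩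
    exact ⟨hxα, hyα, hzα, fun h => hyx h.symm, fun h => hzy h.symm, fun h => hzx h.symm, hzf⟩
  · rintro ⟨hxα, hyα, hzα, hxy, hyz, hxz, hf⟩
    have h2 : insert y (insert x α) ∈ X.faces :=
      X.down_closed _ hf _ (Finset.subset_insert _ _)
    have h1 : insert x α ∈ X.faces := X.down_closed _ h2 _ (Finset.subset_insert _ _)
    exact ⟨⟨hxα, h1⟩, ⟨⟨fun h => hxy h.symm, hyα⟩, h2⟩,
      ⟨fun h => hyz h.symm, fun h => hxz h.symm, hzα⟩, hf⟩

lemma link_triple_rot (α : Finset V) (F : V → V → V → ℝ) :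
    ∑ x ∈ X.linkVerts α, ∑ y ∈ X.linkVerts (insert x α),
        ∑ z ∈ X.linkVerts (insert y (insert x α)), F x y z
      = ∑ y ∈ X.linkVerts α, ∑ z ∈ X.linkVerts (insert y α),
          ∑ x ∈ X.linkVerts (insert z (insert y α)), F x y z := by
  have rect : ∀ G : V → V → V → ℝ,
      (∑ x ∈ X.linkVerts α, ∑ y ∈ X.linkVerts (insert x α),
          ∑ z ∈ X.linkVerts (insert y (insert x α)), G x y z)
        = ∑ x ∈ Finset.univ, ∑ y ∈ Finset.univ, ∑ z ∈ (Finset.univ : Finset V),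
            if x ∈ X.linkVerts α ∧ y ∈ X.linkVerts (insert x α)
                ∧ z ∈ X.linkVerts (insert y (insert x α)) then G x y z else 0 := by
    intro G
    rw [sum_to_univ (X.linkVerts α)]
    apply Finset.sum_congr rfl
    intro x _
    by_cases hx : x ∈ X.linkVerts α
    · simp only [hx, if_true, true_and]
      rw [sum_to_univ (X.linkVerts (insert x α))]
      apply Finset.sum_congr rfl
      intro y _
      by_cases hy : y ∈ X.linkVerts (insert x α)
      · simp only [hy, if_true, true_and]
        rw [sum_to_univ (X.linkVerts (insert y (insert x α)))]
      · simp [hy]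
    · simp [hx]
  have chain_rot : ∀ x y z : V,
      (x ∈ X.linkVerts α ∧ y ∈ X.linkVerts (insert x α)
          ∧ z ∈ X.linkVerts (insert y (insert x α)))
        ↔ (y ∈ X.linkVerts α ∧ z ∈ X.linkVerts (insert y α)
          ∧ x ∈ X.linkVerts (insert z (insert y α))) := by
    intro x y z
    rw [X.link_chain_iff α x y z, X.link_chain_iff α y z x]
    have hset : insert z (insert y (insert x α)) = insert x (insert z (insert y α)) := by
      ext a; simp only [Finset.mem_insert]; tauto
    rw [hset]
    constructor
    · rintro ⟨h1, h2, h3, h4, h5, h6, h7⟩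
      exact ⟨h2, h3, h1, h5, fun h => h6 h.symm, fun h => h4 h.symm, h7⟩
    · rintro ⟨h1, h2, h3, h4, h5, h6, h7⟩
      exact ⟨h3, h1, h2, fun h => h6 h.symm, h4, fun h => h5 h.symm, h7⟩
  rw [rect F, rect (fun y z x => F x y z)]
  rw [Finset.sum_comm]
  have swap_inner : ∀ y : V,
      (∑ x ∈ Finset.univ, ∑ z ∈ (Finset.univ : Finset V),
        if x ∈ X.linkVerts α ∧ y ∈ X.linkVerts (insert x α)
            ∧ z ∈ X.linkVerts (insert y (insert x α)) then F x y z else 0)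
      = ∑ z ∈ Finset.univ, ∑ x ∈ (Finset.univ : Finset V),
        if x ∈ X.linkVerts α ∧ y ∈ X.linkVerts (insert x α)
            ∧ z ∈ X.linkVerts (insert y (insert x α)) then F x y z else 0 :=
    fun y => Finset.sum_comm
  rw [Finset.sum_congr rfl (fun y _ => swap_inner y)]
  apply Finset.sum_congr rfl
  intro y _
  apply Finset.sum_congr rfl
  intro z _
  apply Finset.sum_congr rfl
  intro x _
  exact if_congr (chain_rot x y z) rfl rfl

lemma self_localize (α : Finset V) (hα : α ∈ X.faces) (hcard : α.card + 1 ≤ d) (g : V → ℝ) :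
    ∑ x ∈ X.linkVerts α, X.linkPi α {x} * X.linkInner (insert x α) g g
      = X.linkInner α g g := by
  have e : ∀ x ∈ X.linkVerts α, X.linkPi α {x} * X.linkInner (insert x α) g g
      = ∑ y ∈ X.linkVerts (insert x α),
          (X.W (α.card + 2) (insert y (insert x α))
            / ((((α.card : ℝ) + 1) * ((α.card : ℝ) + 2)) * X.W α.card α)) * (g y * g y) := by
    intro x hx
    unfold linkInner
    rw [Finset.mul_sum]
    apply Finset.sum_congr rfl
    intro y hy
    rw [← X.kernel_eval α hα hcard x hx y hy]
    ring
  rw [Finset.sum_congr rfl e, X.link_pair_swap α]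
  unfold linkInner
  apply Finset.sum_congr rfl
  intro y hy
  rw [← Finset.sum_mul, X.kernel_row_sum α hα hcard y hy]
  ring

lemma walk_localize (α : Finset V) (hα : α ∈ X.faces) (hcard : α.card + 2 ≤ d) (g : V → ℝ) :
    X.linkInner α g (X.linkWalk α g)
      = ∑ x ∈ X.linkVerts α, X.linkPi α {x}
          * X.linkInner (insert x α) g (X.linkWalk (insert x α) g) := by
  have hWα := X.W_pos α.card (by omega) α hα rfl
  have ex : ∀ x ∈ X.linkVerts α,
      X.linkPi α {x} * X.linkInner (insert x α) g (X.linkWalk (insert x α) g)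
        = ∑ y ∈ X.linkVerts (insert x α), ∑ z ∈ X.linkVerts (insert y (insert x α)),
            (X.W (α.card + 3) (insert z (insert y (insert x α)))
              / ((((α.card : ℝ) + 1) * ((α.card : ℝ) + 2) * ((α.card : ℝ) + 3))
                * X.W α.card α)) * g y * g z := by
    intro x hx
    rw [X.linkInner_walk (insert x α) (X.linkVerts_mem_faces α x hx)
      (by rw [X.card_insert_lv α x hx]; omega) g g]
    rw [Finset.mul_sum]
    apply Finset.sum_congr rfl
    intro y hy
    rw [Finset.mul_sum]
    apply Finset.sum_congr rfl
    intro z hz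
    rw [X.card_insert_lv α x hx]
    have hnn : α.card + 1 + 2 = α.card + 3 := by omega
    rw [hnn]
    rw [X.linkPi_single α x (X.linkVerts_not_mem α x hx)]
    have hWαx := X.W_pos (α.card + 1) (by omega) (insert x α)
      (X.linkVerts_mem_faces α x hx) (X.card_insert_lv α x hx)
    have h3 : X.W α.card α ≠ 0 := ne_of_gt hWα
    have h4 : X.W (α.card + 1) (insert x α) ≠ 0 := ne_of_gt hWαx
    have c1 : ((α.card : ℝ) + 1) ≠ 0 := by positivity
    have c2 : ((α.card : ℝ) + 2) ≠ 0 := by positivity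
    have c3 : ((α.card : ℝ) + 3) ≠ 0 := by positivity
    push_cast
    field_simp
    ring
  rw [Finset.sum_congr rfl ex,
    X.link_triple_rot α (fun x y z =>
      (X.W (α.card + 3) (insert z (insert y (insert x α)))
        / ((((α.card : ℝ) + 1) * ((α.card : ℝ) + 2) * ((α.card : ℝ) + 3))
          * X.W α.card α)) * g y * g z),
    X.linkInner_walk α hα (by omega) g g]
  apply Finset.sum_congr rfl
  intro y hy
  apply Finset.sum_congr rfl
  intro z hz
  have hyα := X.linkVerts_not_mem α y hy
  have hzins := X.linkVerts_not_mem _ z hz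
  have hβf := X.linkVerts_mem_faces _ z hz
  have hβc : (insert z (insert y α)).card = α.card + 2 := by
    rw [Finset.card_insert_of_notMem hzins, X.card_insert_lv α y hy]
  have hset : ∀ x : V, insert z (insert y (insert x α)) = insert x (insert z (insert y α)) := by
    intro x; ext a; simp only [Finset.mem_insert]; tauto
  have e2 : ∀ x ∈ X.linkVerts (insert z (insert y α)),
      (X.W (α.card + 3) (insert z (insert y (insert x α)))
        / ((((α.card : ℝ) + 1) * ((α.card : ℝ) + 2) * ((α.card : ℝ) + 3))
          * X.W α.card α)) * g y * g z
      = X.W ((insert z (insert y α)).card + 1) (insert x (insert z (insert y α)))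
          * (g y * g z / ((((α.card : ℝ) + 1) * ((α.card : ℝ) + 2) * ((α.card : ℝ) + 3))
            * X.W α.card α)) := by
    intro x _
    rw [hset x, hβc]
    have hnn2 : α.card + 2 + 1 = α.card + 3 := by omega
    rw [hnn2]
    ring
  rw [Finset.sum_congr rfl e2, ← Finset.sum_mul,
    X.W_rec_link (insert z (insert y α)) (by omega), hβc]
  have h3 : X.W α.card α ≠ 0 := ne_of_gt hWα
  have c1 : ((α.card : ℝ) + 1) ≠ 0 := by positivity
  have c2 : ((α.card : ℝ) + 2) ≠ 0 := by positivity
  have c3 : ((α.card : ℝ) + 3) ≠ 0 := by positivity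
  push_cast
  field_simp
  ring

/-! ### Existence of an eigenfunction attaining `linkLam2` -/

lemma exists_eigenfunction (α : Finset V) (hα : α ∈ X.faces) (hcard : α.card + 1 ≤ d)
    (f₀ : V → ℝ) (hf₀1 : X.linkInner α f₀ (fun _ => 1) = 0)
    (hf₀2 : X.linkInner α f₀ f₀ ≠ 0) :
    ∃ g : V → ℝ, X.linkInner α g (fun _ => 1) = 0 ∧ X.linkInner α g g ≠ 0 ∧
      ∀ x ∈ X.linkVerts α, X.linkWalk α g x = X.linkLam2 α * g x := by
  classical
  have hπ : ∀ x ∈ X.linkVerts α, 0 < X.linkPi α {x} :=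
    fun x hx => X.linkPi_single_pos α hα (by omega) x hx
  set κ : V → V → ℝ := fun x y =>
    if y ≠ x ∧ insert y (insert x α) ∈ X.faces
    then X.linkPi α {x, y} / (2 * X.linkPi α {x}) else 0 with hκ
  have hwalkκ : ∀ (u : V → ℝ) (x : V),
      X.linkWalk α u x = ∑ y ∈ X.linkVerts α, κ x y * u y := by
    intro u x
    unfold linkWalk
    rw [Finset.sum_filter]
    apply Finset.sum_congr rfl
    intro y _
    by_cases h : y ≠ x ∧ insert y (insert x α) ∈ X.faces
    · rw [if_pos h, hκ]; simp [h]
    · rw [if_neg h, hκ]; simp [h]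
  have hκsym : ∀ x ∈ X.linkVerts α, ∀ y ∈ X.linkVerts α,
      X.linkPi α {x} * κ x y = X.linkPi α {y} * κ y x := by
    intro x hx y hy
    have hπx := hπ x hx
    have hπy := hπ y hy
    by_cases h : y ≠ x ∧ insert y (insert x α) ∈ X.faces
    · have h' : x ≠ y ∧ insert x (insert y α) ∈ X.faces := by
        refine ⟨h.1.symm, ?_⟩
        rw [Finset.insert_comm]
        exact h.2
      simp only [hκ]
      rw [if_pos h, if_pos h']
      have e : ({y, x} : Finset V) = {x, y} := Finset.pair_comm y x
      rw [e]
      have hπx' : X.linkPi α {x} ≠ 0 := ne_of_gt hπx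
      have hπy' : X.linkPi α {y} ≠ 0 := ne_of_gt hπy
      field_simp
    · have h' : ¬(x ≠ y ∧ insert x (insert y α) ∈ X.faces) := by
        intro hcon
        apply h
        refine ⟨hcon.1.symm, ?_⟩
        rw [Finset.insert_comm]
        exact hcon.2
      simp only [hκ]
      rw [if_neg h, if_neg h']
      ring
  -- Euclidean space setup
  set ι := {a : V // a ∈ X.linkVerts α} with hι
  set sq : V → ℝ := fun x => Real.sqrt (X.linkPi α {x}) with hsq
  have hsqpos : ∀ x ∈ X.linkVerts α, 0 < sq x := fun x hx => Real.sqrt_pos.mpr (hπ x hx)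
  have hsqsq : ∀ x ∈ X.linkVerts α, sq x * sq x = X.linkPi α {x} :=
    fun x hx => Real.mul_self_sqrt (hπ x hx).le
  set B : ι → ι → ℝ := fun x y => sq x.1 * κ x.1 y.1 / sq y.1 with hB
  have hBsym : ∀ x y : ι, B x y = B y x := by
    intro x y
    rw [hB]
    have h1 := hκsym x.1 x.2 y.1 y.2
    have hx := hsqpos x.1 x.2
    have hy := hsqpos y.1 y.2
    have hx2 := hsqsq x.1 x.2
    have hy2 := hsqsq y.1 y.2
    rw [div_eq_div_iff (ne_of_gt hy) (ne_of_gt hx)]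
    calc sq x.1 * κ x.1 y.1 * sq x.1 = (sq x.1 * sq x.1) * κ x.1 y.1 := by ring
      _ = X.linkPi α {x.1} * κ x.1 y.1 := by rw [hx2]
      _ = X.linkPi α {y.1} * κ y.1 x.1 := h1
      _ = (sq y.1 * sq y.1) * κ y.1 x.1 := by rw [hy2]
      _ = sq y.1 * κ y.1 x.1 * sq y.1 := by ring
  set T : EuclideanSpace ℝ ι →ₗ[ℝ] EuclideanSpace ℝ ι := {
    toFun := fun v => WithLp.toLp 2 (fun x => ∑ y : ι, B x y * v y)
    map_add' := by
      intro u v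
      ext x
      simp only [PiLp.add_apply, PiLp.toLp_apply]
      rw [← Finset.sum_add_distrib]
      exact Finset.sum_congr rfl fun y _ => by ring
    map_smul' := by
      intro c v
      ext x
      simp only [PiLp.smul_apply, PiLp.toLp_apply, smul_eq_mul, RingHom.id_apply]
      rw [Finset.mul_sum]
      exact Finset.sum_congr rfl fun y _ => by ring } with hT
  have hTapp : ∀ (v : EuclideanSpace ℝ ι) (x : ι), T v x = ∑ y : ι, B x y * v y :=
    fun v x => rfl
  have hIP : ∀ u v : EuclideanSpace ℝ ι, (inner ℝ u v : ℝ) = ∑ y : ι, u y * v y := by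
    intro u v
    rw [PiLp.inner_apply]
    apply Finset.sum_congr rfl
    intro y _
    simp [RCLike.inner_apply, starRingEnd_apply, mul_comm]
  set toE : (V → ℝ) → EuclideanSpace ℝ ι := fun u => WithLp.toLp 2 (fun x => sq x.1 * u x.1) with htoE
  set ofE : EuclideanSpace ℝ ι → (V → ℝ) :=
    fun v => fun y => if h : y ∈ X.linkVerts α then v ⟨y, h⟩ / sq y else 0 with hofE
  have htoE_ofE : ∀ v : EuclideanSpace ℝ ι, toE (ofE v) = v := by
    intro v
    ext x
    rw [htoE, hofE]
    simp only [x.2, dif_pos]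
    have := hsqpos x.1 x.2
    field_simp
    rfl
  have hinn : ∀ u w : V → ℝ, X.linkInner α u w = (inner ℝ (toE u) (toE w) : ℝ) := by
    intro u w
    rw [hIP]
    unfold linkInner
    rw [← Finset.sum_coe_sort (X.linkVerts α)
      (fun x => X.linkPi α {x} * u x * w x)]
    apply Finset.sum_congr rfl
    intro y _
    rw [htoE]
    simp only []
    rw [← hsqsq y.1 y.2]
    ring
  have hTmul : ∀ u : V → ℝ, T (toE u) = toE (X.linkWalk α u) := by
    intro u
    ext x
    rw [hTapp, htoE]
    simp only []
    rw [hwalkκ u x.1]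
    rw [← Finset.sum_coe_sort (X.linkVerts α) (fun y => κ x.1 y * u y), Finset.mul_sum]
    apply Finset.sum_congr rfl
    intro y _
    simp only [hB]
    have := hsqpos y.1 y.2
    field_simp
  set w : EuclideanSpace ℝ ι := toE (fun _ => 1) with hw
  have hTw : T w = w := by
    rw [hw, hTmul (fun _ => 1)]
    ext x
    rw [htoE]
    simp only []
    rw [X.linkWalk_const α hα (by omega) 1 x.1 x.2]
  have hTsym : T.IsSymmetric := by
    intro u v
    rw [hIP, hIP]
    have e1 : ∀ y : ι, T u y * v y = ∑ z : ι, B y z * u z * v y := by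
      intro y
      rw [hTapp, Finset.sum_mul]
    have e2 : ∀ y : ι, u y * T v y = ∑ z : ι, B y z * v z * u y := by
      intro y
      rw [hTapp, Finset.mul_sum]
      exact Finset.sum_congr rfl fun z _ => by ring
    rw [Finset.sum_congr rfl (fun y _ => e1 y), Finset.sum_congr rfl (fun y _ => e2 y)]
    rw [Finset.sum_comm]
    apply Finset.sum_congr rfl
    intro z _
    apply Finset.sum_congr rfl
    intro y _
    rw [hBsym y z]
    ring
  set K : Submodule ℝ (EuclideanSpace ℝ ι) := (ℝ ∙ w)ᗮ with hK
  have hmemK : ∀ v : EuclideanSpace ℝ ι, v ∈ K ↔ (inner ℝ w v : ℝ) = 0 := by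
    intro v
    rw [hK]
    exact Submodule.mem_orthogonal_singleton_iff_inner_right
  have hTK : ∀ v ∈ K, T v ∈ K := by
    intro v hv
    rw [hmemK] at hv ⊢
    calc (inner ℝ w (T v) : ℝ) = inner ℝ (T w) v := (hTsym w v).symm
      _ = inner ℝ w v := by rw [hTw]
      _ = 0 := hv
  have hf₀K : toE f₀ ∈ K := by
    rw [hmemK, hw, ← hinn (fun _ => 1) f₀, X.linkInner_comm]
    exact hf₀1
  have hf₀ne : toE f₀ ≠ 0 := by
    intro hcon
    apply hf₀2
    rw [hinn, hcon, inner_zero_right]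
  haveI : Nontrivial ↥K := by
    refine ⟨⟨⟨toE f₀, hf₀K⟩, 0, ?_⟩⟩
    intro hcon
    apply hf₀ne
    have := congrArg (Subtype.val) hcon
    simpa using this
  set T' : ↥K →ₗ[ℝ] ↥K := T.restrict hTK with hT'
  have hT'sym : T'.IsSymmetric := hTsym.restrict_invariant hTK
  have heigval := hT'sym.hasEigenvalue_iSup_of_finiteDimensional
  set μ : ℝ := ⨆ x : { x : ↥K // x ≠ 0 },
    RCLike.re (inner ℝ (T' ↑x) ↑x : ℝ) / ‖(↑x : ↥K)‖ ^ 2 with hμ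
  -- generic correspondences
  have hKmem : ∀ f : V → ℝ, X.linkInner α f (fun _ => 1) = 0 → toE f ∈ K := by
    intro f h1
    rw [hmemK, hw, ← hinn (fun _ => 1) f, X.linkInner_comm]
    exact h1
  have hEne : ∀ f : V → ℝ, X.linkInner α f f ≠ 0 → toE f ≠ 0 := by
    intro f h2 hcon
    apply h2
    rw [hinn, hcon, inner_zero_right]
  have hnum : ∀ f : V → ℝ,
      X.linkInner α f (X.linkWalk α f) = (inner ℝ (T (toE f)) (toE f) : ℝ) := by
    intro f
    rw [X.linkInner_comm, hinn (X.linkWalk α f) f, ← hTmul f]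
  have hden : ∀ f : V → ℝ, X.linkInner α f f = ‖toE f‖ ^ 2 := by
    intro f
    rw [hinn, real_inner_self_eq_norm_sq]
  have hKip : ∀ u v : ↥K, (inner ℝ u v : ℝ) = (inner ℝ (↑u : EuclideanSpace ℝ ι) ↑v : ℝ) :=
    fun u v => rfl
  have hKnorm : ∀ u : ↥K, ‖u‖ = ‖(↑u : EuclideanSpace ℝ ι)‖ := fun u => rfl
  have hT'coe : ∀ u : ↥K, ((T' u : ↥K) : EuclideanSpace ℝ ι) = T ↑u := fun u => rfl
  -- the Rayleigh sets agree
  have hSeq : { r : ℝ | ∃ f : V → ℝ,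
      X.linkInner α f (fun _ => 1) = 0 ∧ X.linkInner α f f ≠ 0 ∧
      r = X.linkInner α f (X.linkWalk α f) / X.linkInner α f f }
      = Set.range (fun x : { x : ↥K // x ≠ 0 } =>
          RCLike.re (inner ℝ (T' ↑x) ↑x : ℝ) / ‖(↑x : ↥K)‖ ^ 2) := by
    ext r
    constructor
    · rintro ⟨f, h1, h2, rfl⟩
      have hvK : toE f ∈ K := hKmem f h1
      have hvne : toE f ≠ 0 := hEne f h2
      have hne' : (⟨toE f, hvK⟩ : ↥K) ≠ 0 := by
        intro hcon
        apply hvne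
        have := congrArg (Subtype.val) hcon
        simpa using this
      refine ⟨⟨⟨toE f, hvK⟩, hne'⟩, ?_⟩
      simp only []
      rw [hKip, hKnorm, hT'coe]
      rw [RCLike.re_to_real]
      rw [← hnum f, ← hden f]
    · rintro ⟨⟨v, hvne⟩, rfl⟩
      set f : V → ℝ := ofE ↑v with hf
      have htf : toE f = ↑v := htoE_ofE ↑v
      have hvne' : (↑v : EuclideanSpace ℝ ι) ≠ 0 := by
        intro hcon
        apply hvne
        apply Subtype.ext
        simpa using hcon
      refine ⟨f, ?_, ?_, ?_⟩
      · rw [X.linkInner_comm, hinn (fun _ => 1) f, ← hw, htf]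
        exact (hmemK ↑v).mp v.2
      · rw [hden f, htf]
        intro hcon
        apply hvne'
        have : ‖(↑v : EuclideanSpace ℝ ι)‖ = 0 := by
          have h9 : ‖(↑v : EuclideanSpace ℝ ι)‖ ^ 2 = 0 := hcon.symm ▸ rfl
          nlinarith [norm_nonneg (↑v : EuclideanSpace ℝ ι)]
        exact norm_eq_zero.mp this
      · simp only []
        rw [hKip, hKnorm, hT'coe, RCLike.re_to_real, hnum f, hden f, htf]
  have hlam : X.linkLam2 α = μ := by
    unfold linkLam2
    rw [hSeq, hμ]
    rfl
  -- extract the eigenvector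
  have heig2 : Module.End.HasEigenvalue T' μ := by
    have : ((μ : ℝ) : ℝ) = μ := rfl
    simpa [← hμ] using heigval
  obtain ⟨v, hv⟩ := heig2.exists_hasEigenvector
  have heq : T' v = μ • v := Module.End.mem_eigenspace_iff.mp hv.1
  have heqE : T (↑v : EuclideanSpace ℝ ι) = μ • (↑v : EuclideanSpace ℝ ι) := by
    rw [← hT'coe, heq]
    rfl
  set g : V → ℝ := ofE ↑v with hg
  have htg : toE g = ↑v := htoE_ofE ↑v
  have hvne' : (↑v : EuclideanSpace ℝ ι) ≠ 0 := by
    intro hcon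
    apply hv.2
    apply Subtype.ext
    simpa using hcon
  refine ⟨g, ?_, ?_, ?_⟩
  · rw [X.linkInner_comm, hinn (fun _ => 1) g, ← hw, htg]
    exact (hmemK ↑v).mp v.2
  · rw [hinn, htg]
    intro hcon
    exact hvne' (inner_self_eq_zero.mp hcon)
  · intro x hx
    have hcoord : toE (X.linkWalk α g) ⟨x, hx⟩ = (μ • (↑v : EuclideanSpace ℝ ι)) ⟨x, hx⟩ := by
      rw [← hTmul g, htg, heqE]
    rw [htoE] at hcoord
    simp only [PiLp.smul_apply, smul_eq_mul] at hcoord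
    have hvx : (↑v : EuclideanSpace ℝ ι) ⟨x, hx⟩ = sq x * g x := by
      rw [← htg, htoE]
    rw [hvx] at hcoord
    have hsqx := hsqpos x hx
    have : sq x * X.linkWalk α g x = sq x * (μ * g x) := by
      rw [hcoord]; ring
    have hfin := mul_left_cancel₀ (ne_of_gt hsqx) this
    rw [hfin, hlam]

/-! ### Oppenheim's trickling down -/

lemma oppenheim (α : Finset V) (hα : α ∈ X.faces) (hcard : α.card + 2 ≤ d)
    (c : ℝ) (hc0 : 0 ≤ c) (hc1 : c < 1)
    (hlinks : ∀ x ∈ X.linkVerts α, X.linkLam2 (insert x α) ≤ c)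
    (hconn1 : X.linkLam2 α < 1) :
    X.linkLam2 α ≤ c / (1 - c) := by
  by_cases hne : ∃ f : V → ℝ, X.linkInner α f (fun _ => 1) = 0 ∧ X.linkInner α f f ≠ 0
  · obtain ⟨f₀, h1, h2⟩ := hne
    obtain ⟨g, hg1, hg2, heig⟩ := X.exists_eigenfunction α hα (by omega) f₀ h1 h2
    set lam := X.linkLam2 α with hl
    have hGpos := X.linkInner_self_pos α g hg2
    have hnum : X.linkInner α g (X.linkWalk α g) = lam * X.linkInner α g g := by
      unfold linkInner
      rw [Finset.mul_sum]
      apply Finset.sum_congr rfl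
      intro x hx
      rw [heig x hx]
      ring
    have hloc := X.walk_localize α hα hcard g
    have hself := X.self_localize α hα (by omega) g
    have hstep : ∀ x ∈ X.linkVerts α,
        X.linkPi α {x} * X.linkInner (insert x α) g (X.linkWalk (insert x α) g)
          ≤ X.linkPi α {x} * (c * (X.linkInner (insert x α) g g - (lam * g x) ^ 2)
              + (lam * g x) ^ 2) := by
      intro x hx
      apply mul_le_mul_of_nonneg_left _ (X.linkPi_nonneg α {x})
      have hb := X.link_bound (insert x α) (X.linkVerts_mem_faces α x hx)
        (by rw [X.card_insert_lv α x hx]; omega) c (hlinks x hx) g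
      have hex : ∑ y ∈ X.linkVerts (insert x α), X.linkPi (insert x α) {y} * g y
          = lam * g x := by
        rw [← X.linkWalk_eq α hα (by omega) g x hx]
        exact heig x hx
      rw [hex] at hb
      exact hb
    have hineq : lam * X.linkInner α g g
        ≤ c * X.linkInner α g g + (1 - c) * lam ^ 2 * X.linkInner α g g := by
      have hsum := Finset.sum_le_sum hstep
      rw [← hloc, hnum] at hsum
      have hrhs : ∑ x ∈ X.linkVerts α, X.linkPi α {x}
          * (c * (X.linkInner (insert x α) g g - (lam * g x) ^ 2) + (lam * g x) ^ 2)
          = c * (∑ x ∈ X.linkVerts α, X.linkPi α {x} * X.linkInner (insert x α) g g)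
            + (1 - c) * lam ^ 2
              * (∑ x ∈ X.linkVerts α, X.linkPi α {x} * (g x * g x)) := by
        rw [Finset.mul_sum, Finset.mul_sum, ← Finset.sum_add_distrib]
        exact Finset.sum_congr rfl fun x _ => by ring
      rw [hrhs, hself] at hsum
      have hgg : ∑ x ∈ X.linkVerts α, X.linkPi α {x} * (g x * g x)
          = X.linkInner α g g := by
        unfold linkInner
        exact Finset.sum_congr rfl fun x _ => by ring
      rw [hgg] at hsum
      exact hsum
    have hkey : lam ≤ c + (1 - c) * lam ^ 2 := by
      have h4 : (lam - (c + (1 - c) * lam ^ 2)) * X.linkInner α g g ≤ 0 := by nlinarith [hineq]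
      by_contra hcon2
      push_neg at hcon2
      have h5 : (0:ℝ) < lam - (c + (1 - c) * lam ^ 2) := by linarith
      nlinarith [mul_pos h5 hGpos, h4]
    rw [le_div_iff₀ (by linarith : (0:ℝ) < 1 - c)]
    by_contra hcon
    push_neg at hcon
    have hprod : (lam - 1) * ((1 - c) * lam - c) ≥ 0 := by nlinarith [hkey]
    have h1l : (0:ℝ) < 1 - lam := by linarith [hconn1]
    have h2l : (0:ℝ) < (1 - c) * lam - c := by nlinarith [hcon]
    nlinarith [hprod, mul_pos h1l h2l]
  · have hempty : { r : ℝ | ∃ f : V → ℝ,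
        X.linkInner α f (fun _ => 1) = 0 ∧ X.linkInner α f f ≠ 0 ∧
        r = X.linkInner α f (X.linkWalk α f) / X.linkInner α f f } = ∅ := by
      rw [Set.eq_empty_iff_forall_notMem]
      rintro r ⟨f, h1, h2, -⟩
      exact hne ⟨f, h1, h2⟩
    have h0 : X.linkLam2 α = 0 := by
      unfold linkLam2
      rw [hempty]
      exact Real.sSup_empty
    rw [h0]
    exact div_nonneg hc0 (by linarith)

lemma trickle (k : ℕ) (hk1 : 1 ≤ k) (hkd : k ≤ d)
    (hγ : X.gammaC (k - 1) ≤ 1 / ((k : ℝ) + 1))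
    (hconn : ∀ m : ℕ, m < k → X.gammaC m < 1) :
    ∀ j : ℕ, j ≤ k - 1 → X.gammaC j ≤ 1 / ((j : ℝ) + 2) := by
  have main : ∀ t : ℕ, ∀ j : ℕ, j + t = k - 1 → X.gammaC j ≤ 1 / ((j : ℝ) + 2) := by
    intro t
    induction t with
    | zero =>
      intro j hj
      have hjk : j = k - 1 := by omega
      subst hjk
      have e : ((k - 1 : ℕ) : ℝ) + 2 = (k : ℝ) + 1 := by
        rw [Nat.cast_sub hk1]
        push_cast
        ring
      rw [e]
      exact hγ
    | succ t ih =>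
      intro j hj
      have prev := ih (j + 1) (by omega)
      have hjk : j + 1 ≤ k - 1 := by omega
      apply Real.sSup_le _ (by positivity)
      rintro r ⟨α, hαf, hαc, rfl⟩
      have hαd : α.card + 2 ≤ d := by omega
      have hc0 : (0:ℝ) ≤ 1 / ((j : ℝ) + 3) := by positivity
      have hc1 : 1 / ((j : ℝ) + 3) < 1 := by
        rw [div_lt_one (by positivity)]
        linarith [Nat.cast_nonneg (α := ℝ) j]
      have hopp := X.oppenheim α hαf hαd (1 / ((j : ℝ) + 3)) hc0 hc1 ?_ ?_
      · refine hopp.trans (le_of_eq ?_)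
        have h3 : ((j : ℝ) + 3) ≠ 0 := by positivity
        have h2 : ((j : ℝ) + 2) ≠ 0 := by positivity
        field_simp
        rw [show ((j:ℝ) + 3 - 1) = (j:ℝ) + 2 by ring, div_self h2]
      · intro x hx
        have hcard' : (insert x α).card = j + 1 := by
          rw [X.card_insert_lv α x hx, hαc]
        have hle := X.linkLam2_le_gammaC (insert x α) (X.linkVerts_mem_faces α x hx)
        rw [hcard'] at hle
        refine hle.trans (prev.trans (le_of_eq ?_))
        push_cast
        ring
      · have hle := X.linkLam2_le_gammaC α hαf
        rw [hαc] at hle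
        exact lt_of_le_of_lt hle (hconn j (by omega))
  intro j hj
  exact main (k - 1 - j) j (by omega)

lemma lam2_downUp_bound (k : ℕ) (hk1 : 1 ≤ k) (hkd : k ≤ d)
    (hγ : X.gammaC (k - 1) ≤ 1 / ((k : ℝ) + 1))
    (hconn : ∀ m : ℕ, m < k → X.gammaC m < 1) :
    ∀ m : ℕ, 1 ≤ m → m ≤ k + 1 → X.lam2 m X.downUp ≤ 1 - 1 / (m : ℝ) ^ 2 := by
  have htr := X.trickle k hk1 hkd hγ hconn
  intro m
  induction m with
  | zero => omega
  | succ m ih =>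
    intro h1 h2
    by_cases hm : m = 0
    · subst hm
      have := X.lam2_one_downUp_nonpos
      norm_num
      exact this
    · obtain ⟨m', rfl⟩ : ∃ m', m = m' + 1 := ⟨m - 1, by omega⟩
      have hm1 : 1 ≤ m' + 1 := by omega
      have hmk : m' + 1 ≤ k := by omega
      have prev := ih hm1 (by omega)
      have heq := X.lam2_eq (m' + 1) (by omega)
      rw [heq]
      set R : ℝ := 1 - 1 / ((m' : ℝ) + 1) ^ 2 with hR
      have hR0 : 0 ≤ R := by
        rw [hR]
        have h9 : (1:ℝ) ≤ ((m' : ℝ) + 1) ^ 2 := by nlinarith [Nat.cast_nonneg (α := ℝ) m']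
        have h10 : 1 / ((m' : ℝ) + 1) ^ 2 ≤ 1 := by
          rw [div_le_one (by positivity)]
          exact h9
        linarith
      have hprev' : X.lam2 (m' + 1) X.downUp ≤ R := by
        refine prev.trans (le_of_eq ?_)
        rw [hR]
        push_cast
        ring
      have hγm : X.gammaC m' ≤ 1 / ((m' : ℝ) + 2) := htr m' (by omega)
      have hγ0 : (0:ℝ) ≤ 1 / ((m' : ℝ) + 2) := by positivity
      have hγ1 : 1 / ((m' : ℝ) + 2) ≤ 1 := by
        rw [div_le_one (by positivity)]
        linarith [Nat.cast_nonneg (α := ℝ) m']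
      have hstep := X.upDown_step m' (by omega) (1 / ((m' : ℝ) + 2)) hγm hγ0 hγ1 R hR0 hprev'
      refine hstep.trans (le_of_eq ?_)
      have h2' : ((m' : ℝ) + 2) ≠ 0 := by positivity
      have h1' : ((m' : ℝ) + 1) ≠ 0 := by positivity
      rw [hR]
      push_cast
      field_simp
      ring

end WSC

/-- **Corollary.** Let `(X, Π)` be a weighted pure `d`-dimensional simplicial
complex and `1 ≤ k ≤ d`.  If `γ_{k-2} ≤ 1/(k+1)` and `γ_j < 1` for all
`-1 ≤ j ≤ k-2` (i.e. `X.gammaC m < 1` for all cardinalities `m < k`), then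
`λ₂(P∨_k) = λ₂(P∧_{k-1}) ≤ 1 - 1/(k+1)²`. -/
theorem lam2_downUp_le_of_gamma {V : Type*} [DecidableEq V] [Fintype V] {d : ℕ}
    (X : WSC V d) (k : ℕ) (hk1 : 1 ≤ k) (hkd : k ≤ d)
    (hγ : X.gammaC (k - 1) ≤ 1 / ((k : ℝ) + 1))
    (hconn : ∀ m : ℕ, m < k → X.gammaC m < 1) :
    X.lam2 (k + 1) X.downUp = X.lam2 k X.upDown ∧
    X.lam2 (k + 1) X.downUp ≤ 1 - 1 / ((k : ℝ) + 1) ^ 2 := by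
  constructor
  · exact X.lam2_eq k hkd
  · have hb := X.lam2_downUp_bound k hk1 hkd hγ hconn (k + 1) (by omega) (le_refl _)
    refine hb.trans (le_of_eq ?_)
    push_cast
    ring
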